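/- arXiv:1112.2679 — 9 statements merged into one kernel-verified Lean document; each statement's English description precedes it below -/
import Mathlib

section
/- Let F be an index set with supp(x̄) ⊆ F and |F| = s, and assume ρ(E,s) ≤ Δλ/2. Then the ratio of the second largest (in absolute value) eigenvalue of the principal submatrix A_F to its largest eigenvalue is at most γ(s); that is, λ_1(A_F) > 0 and max_{j ≥ 2} |λ_j(A_F)| ≤ γ(s) · λ_1(A_F), where λ_1(A_F) ≥ λ_2(A_F) ≥ … are the eigenvalues of A_F in decreasing order. -/
namespace TPaper

noncomputable def nrm2 {p : ℕ} (x : Fin p → ℝ) : ℝ := Real.sqrt (∑ i, x i ^ 2)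

def dotp {p : ℕ} (x y : Fin p → ℝ) : ℝ := ∑ i, x i * y i

noncomputable def supp {p : ℕ} (x : Fin p → ℝ) : Finset (Fin p) :=
  Finset.univ.filter fun i => x i ≠ 0

def subm {p : ℕ} (A : Matrix (Fin p) (Fin p) ℝ) (F : Finset (Fin p)) :
    Matrix {i // i ∈ F} {i // i ∈ F} ℝ :=
  A.submatrix Subtype.val Subtype.val

noncomputable def specNorm {n : Type*} [Fintype n] [DecidableEq n]
    (B : Matrix n n ℝ) : ℝ :=
  sSup {r : ℝ | ∃ μ ∈ spectrum ℝ B, r = |μ|}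

noncomputable def rhoRes {p : ℕ} (E : Matrix (Fin p) (Fin p) ℝ) (s : ℕ) : ℝ :=
  sSup {r : ℝ | ∃ F : Finset (Fin p), F.card = s ∧ r = specNorm (subm E F)}

def Trunc {p : ℕ} (x : Fin p → ℝ) (F : Finset (Fin p)) : Fin p → ℝ :=
  fun i => if i ∈ F then x i else 0

def IsTopK {p : ℕ} (y : Fin p → ℝ) (k : ℕ) (F : Finset (Fin p)) : Prop :=
  F.card = k ∧ ∀ i ∈ F, ∀ j ∉ F, |y j| ≤ |y i|

noncomputable def maxEig {n : Type*} [Fintype n] [DecidableEq n]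
    (B : Matrix n n ℝ) : ℝ :=
  sSup (spectrum ℝ B)

noncomputable def eigList {n : Type*} [Fintype n] [DecidableEq n] {B : Matrix n n ℝ}
    (hB : B.IsHermitian) : List ℝ :=
  ((Finset.univ.val.map hB.eigenvalues).sort (· ≤ ·)).reverse

/-! ### Auxiliary lemmas -/

open scoped RealInnerProductSpace

section Helpers
variable {n : Type*} [Fintype n] [DecidableEq n]

omit [DecidableEq n] in
lemma inner_eq_dot (x y : EuclideanSpace ℝ n) : ⟪x, y⟫ = dotProduct x y := by
  simp [PiLp.inner_apply, RCLike.inner_apply, dotProduct, mul_comm]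

omit [DecidableEq n] in
lemma dot_mulVec_symm {M : Matrix n n ℝ} (hM : M.IsHermitian) (u w : n → ℝ) :
    dotProduct u (M.mulVec w) = dotProduct (M.mulVec u) w := by
  simp only [dotProduct, Matrix.mulVec, Finset.mul_sum, Finset.sum_mul]
  rw [Finset.sum_comm]
  refine Finset.sum_congr rfl fun i _ => Finset.sum_congr rfl fun j _ => ?_
  have h : M j i = M i j := by
    have := congrFun (congrFun hM i) j
    simpa [Matrix.conjTranspose_apply] using this
  rw [h]; ring

omit [DecidableEq n] in
lemma parseval₂ (b : OrthonormalBasis n ℝ (EuclideanSpace ℝ n)) (v w : EuclideanSpace ℝ n) :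
    dotProduct (v : n → ℝ) w
      = ∑ j, (dotProduct (b j : n → ℝ) v) * (dotProduct (b j : n → ℝ) w) := by
  have h1 : ⟪v, w⟫ = ⟪b.repr v, b.repr w⟫ := (b.repr.inner_map_map v w).symm
  rw [inner_eq_dot, inner_eq_dot] at h1
  rw [h1]
  simp only [dotProduct]
  refine Finset.sum_congr rfl fun j _ => ?_
  have hv : b.repr v j = ⟪b j, v⟫ := b.repr_apply_apply v j
  have hw : b.repr w j = ⟪b j, w⟫ := b.repr_apply_apply w j
  rw [hv, hw, inner_eq_dot, inner_eq_dot]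
  rfl

omit [DecidableEq n] in
lemma parseval (b : OrthonormalBasis n ℝ (EuclideanSpace ℝ n)) (v : EuclideanSpace ℝ n) :
    dotProduct (v : n → ℝ) v = ∑ j, (dotProduct (b j : n → ℝ) v) ^ 2 := by
  rw [parseval₂ b v v]; simp [pow_two]

lemma dot_mulVec_eq {M : Matrix n n ℝ} (hM : M.IsHermitian) (v : EuclideanSpace ℝ n) :
    dotProduct (v : n → ℝ) (M.mulVec v)
      = ∑ j, hM.eigenvalues j *
          (dotProduct (hM.eigenvectorBasis j : n → ℝ) v) ^ 2 := by
  have hp := parseval₂ hM.eigenvectorBasis v (WithLp.toLp 2 (M.mulVec v))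
  simp only [WithLp.ofLp_toLp] at hp
  rw [hp]
  refine Finset.sum_congr rfl fun j _ => ?_
  rw [dot_mulVec_symm hM,
    show M.mulVec (hM.eigenvectorBasis j) = hM.eigenvalues j • (hM.eigenvectorBasis j : n → ℝ)
      from hM.mulVec_eigenvectorBasis j,
    smul_dotProduct, smul_eq_mul]
  ring

lemma dot_orthonormal (b : OrthonormalBasis n ℝ (EuclideanSpace ℝ n)) (i j : n) :
    dotProduct (b i : n → ℝ) (b j) = if i = j then 1 else 0 := by
  have h := b.orthonormal
  rw [orthonormal_iff_ite] at h
  rw [← inner_eq_dot]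
  exact h i j

lemma abs_eig_le_specNorm {C : Matrix n n ℝ} (hC : C.IsHermitian) (j : n) :
    |hC.eigenvalues j| ≤ specNorm C := by
  have hfin : (spectrum ℝ C).Finite := C.finite_real_spectrum
  have hset : {r : ℝ | ∃ μ ∈ spectrum ℝ C, r = |μ|} = (fun μ => |μ|) '' spectrum ℝ C := by
    ext r; simp [Set.mem_image, eq_comm]
  have hbdd : BddAbove {r : ℝ | ∃ μ ∈ spectrum ℝ C, r = |μ|} := by
    rw [hset]; exact (hfin.image _).bddAbove
  exact le_csSup hbdd ⟨_, hC.eigenvalues_mem_spectrum_real j, rfl⟩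

lemma rayleigh_le {M : Matrix n n ℝ} (hM : M.IsHermitian) (v : n → ℝ) {a : ℝ}
    (h : ∀ j, hM.eigenvalues j ≤ a) :
    dotProduct v (M.mulVec v) ≤ a * dotProduct v v := by
  have e1 := dot_mulVec_eq hM (WithLp.toLp 2 v)
  have e2 := parseval hM.eigenvectorBasis (WithLp.toLp 2 v)
  simp only [WithLp.ofLp_toLp] at e1 e2
  rw [e1, e2, Finset.mul_sum]
  exact Finset.sum_le_sum fun j _ => mul_le_mul_of_nonneg_right (h j) (sq_nonneg _)

lemma rayleigh_ge {M : Matrix n n ℝ} (hM : M.IsHermitian) (v : n → ℝ) {a : ℝ}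
    (h : ∀ j, a ≤ hM.eigenvalues j) :
    a * dotProduct v v ≤ dotProduct v (M.mulVec v) := by
  have e1 := dot_mulVec_eq hM (WithLp.toLp 2 v)
  have e2 := parseval hM.eigenvectorBasis (WithLp.toLp 2 v)
  simp only [WithLp.ofLp_toLp] at e1 e2
  rw [e1, e2, Finset.mul_sum]
  exact Finset.sum_le_sum fun j _ => mul_le_mul_of_nonneg_right (h j) (sq_nonneg _)

lemma rayleigh_abs_le {M : Matrix n n ℝ} (hM : M.IsHermitian) (v : n → ℝ) {a : ℝ}
    (h : ∀ j, |hM.eigenvalues j| ≤ a) :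
    |dotProduct v (M.mulVec v)| ≤ a * dotProduct v v := by
  rw [abs_le]
  constructor
  · have := rayleigh_ge hM v (a := -a) (fun j => neg_le_of_abs_le (h j))
    rwa [neg_mul] at this
  · exact rayleigh_le hM v (fun j => le_of_abs_le (h j))

end Helpers

/-- extension of a vector on a subset by zero -/
def ext' {p : ℕ} (F : Finset (Fin p)) (u : {i // i ∈ F} → ℝ) : Fin p → ℝ :=
  fun i => if h : i ∈ F then u ⟨i, h⟩ else 0

lemma sum_ext_mul {p : ℕ} (F : Finset (Fin p)) (u : {i // i ∈ F} → ℝ) (y : Fin p → ℝ) :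
    ∑ i, ext' F u i * y i = ∑ i : {i // i ∈ F}, u i * y i.val := by
  rw [show ∑ i, ext' F u i * y i = ∑ i ∈ F, ext' F u i * y i from
    (Finset.sum_subset F.subset_univ (fun i _ hi => by simp [ext', hi])).symm]
  rw [← Finset.sum_coe_sort F (fun i => ext' F u i * y i)]
  refine Finset.sum_congr rfl fun i _ => ?_
  simp [ext', i.2]

lemma mulVec_ext {p : ℕ} (A : Matrix (Fin p) (Fin p) ℝ) (F : Finset (Fin p))
    (u : {i // i ∈ F} → ℝ) (i : {i // i ∈ F}) :
    (A.mulVec (ext' F u)) i.val = ((A.submatrix Subtype.val Subtype.val).mulVec u) i := by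
  show dotProduct (fun j => A i.val j) (ext' F u) = _
  rw [dotProduct_comm]
  calc dotProduct (ext' F u) (fun j => A i.val j)
      = ∑ j : {i // i ∈ F}, u j * A i.val j.val := sum_ext_mul F u _
    _ = _ := by
        simp only [Matrix.mulVec, dotProduct, Matrix.submatrix_apply]
        exact Finset.sum_congr rfl fun j _ => mul_comm _ _

lemma dot_ext_ext {p : ℕ} (F : Finset (Fin p)) (u v : {i // i ∈ F} → ℝ) :
    dotProduct (ext' F u) (ext' F v) = dotProduct u v := by
  calc dotProduct (ext' F u) (ext' F v)
      = ∑ i : {i // i ∈ F}, u i * ext' F v i.val := sum_ext_mul F u _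
    _ = dotProduct u v := Finset.sum_congr rfl fun i _ => by simp [ext', i.2]

lemma quad_ext {p : ℕ} (A : Matrix (Fin p) (Fin p) ℝ) (F : Finset (Fin p))
    (u : {i // i ∈ F} → ℝ) :
    dotProduct (ext' F u) (A.mulVec (ext' F u))
      = dotProduct u ((A.submatrix Subtype.val Subtype.val).mulVec u) := by
  calc dotProduct (ext' F u) (A.mulVec (ext' F u))
      = ∑ i : {i // i ∈ F}, u i * (A.mulVec (ext' F u)) i.val := sum_ext_mul F u _
    _ = ∑ i : {i // i ∈ F}, u i * ((A.submatrix Subtype.val Subtype.val).mulVec u) i :=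
        Finset.sum_congr rfl fun i _ => by rw [mulVec_ext]
    _ = _ := rfl

set_option maxHeartbeats 1000000 in
theorem statement2 (p kbar s : ℕ)
    (Abar E : Matrix (Fin p) (Fin p) ℝ)
    (hAbar : Abar.IsHermitian) (hE : E.IsHermitian)
    (lam dlam : ℝ) (i0 : Fin p)
    (hi0 : hAbar.eigenvalues i0 = lam)
    (hlam_pos : 0 < lam) (hdlam_pos : 0 < dlam)
    (hgap_le : ∀ j, j ≠ i0 → |hAbar.eigenvalues j| ≤ lam - dlam)
    (hgap_eq : ∃ j, j ≠ i0 ∧ |hAbar.eigenvalues j| = lam - dlam)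
    (xbar : Fin p → ℝ)
    (hxbar_eig : Abar.mulVec xbar = lam • xbar)
    (hxbar_norm : nrm2 xbar = 1)
    (hxbar_supp : (supp xbar).card = kbar)
    (F : Finset (Fin p)) (hFsupp : supp xbar ⊆ F) (hFcard : F.card = s)
    (hrho : rhoRes E s ≤ dlam / 2)
    (gs : ℝ)
    (hgs : gs = (lam - dlam + rhoRes E s) / (lam - rhoRes E s)) :
    0 < (eigList ((hAbar.add hE).submatrix (Subtype.val : {i // i ∈ F} → Fin p))).headI ∧
      ∀ r ∈ (eigList ((hAbar.add hE).submatrix (Subtype.val : {i // i ∈ F} → Fin p))).tail,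
        |r| ≤ gs * (eigList ((hAbar.add hE).submatrix (Subtype.val : {i // i ∈ F} → Fin p))).headI := by
  classical
  obtain ⟨jgap, hjgapne, hjgapeq⟩ := hgap_eq
  have hld : (0:ℝ) ≤ lam - dlam := hjgapeq ▸ abs_nonneg _
  -- normalization of xbar
  have hsum1 : dotProduct xbar xbar = 1 := by
    have h0 : (0:ℝ) ≤ ∑ i, xbar i ^ 2 := Finset.sum_nonneg fun i _ => sq_nonneg _
    have h2 := Real.sq_sqrt h0
    unfold nrm2 at hxbar_norm
    rw [hxbar_norm, one_pow] at h2
    simpa [dotProduct, pow_two] using h2.symm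
  have hxne : ∃ i, xbar i ≠ 0 := by
    by_contra hc
    push_neg at hc
    simp [dotProduct, hc] at hsum1
  obtain ⟨iw, hiw⟩ := hxne
  haveI hne : Nonempty {i // i ∈ F} := ⟨⟨iw, hFsupp (by simp [supp, hiw])⟩⟩
  have hxoff : ∀ i, i ∉ F → xbar i = 0 := by
    intro i hi
    by_contra hxi
    exact hi (hFsupp (by simp [supp, hxi]))
  set ρ := rhoRes E s with hρdef
  -- coefficients of xbar in the eigenbasis of Abar vanish away from i0
  have habar_coeff : ∀ j, j ≠ i0 →
      dotProduct (hAbar.eigenvectorBasis j : Fin p → ℝ) xbar = 0 := by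
    intro j hj
    have h1 : dotProduct (hAbar.eigenvectorBasis j : Fin p → ℝ) (Abar.mulVec xbar)
        = hAbar.eigenvalues j * dotProduct (hAbar.eigenvectorBasis j : Fin p → ℝ) xbar := by
      rw [dot_mulVec_symm hAbar,
        show Abar.mulVec (hAbar.eigenvectorBasis j)
            = hAbar.eigenvalues j • (hAbar.eigenvectorBasis j : Fin p → ℝ)
          from hAbar.mulVec_eigenvectorBasis j,
        smul_dotProduct, smul_eq_mul]
    rw [hxbar_eig, dotProduct_smul, smul_eq_mul] at h1
    have hvne : hAbar.eigenvalues j ≠ lam := by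
      intro he
      have hle := hgap_le j hj
      rw [he] at hle
      have := le_abs_self lam
      linarith
    have hc : (lam - hAbar.eigenvalues j)
        * dotProduct (hAbar.eigenvectorBasis j : Fin p → ℝ) xbar = 0 := by
      linear_combination h1
    rcases mul_eq_zero.mp hc with h | h
    · exact absurd (by linarith [sub_eq_zero.mp h] : hAbar.eigenvalues j = lam) hvne
    · exact h
  have hcsq : dotProduct (hAbar.eigenvectorBasis i0 : Fin p → ℝ) xbar ^ 2 = 1 := by
    have hp := parseval hAbar.eigenvectorBasis (WithLp.toLp 2 xbar)
    simp only [WithLp.ofLp_toLp] at hp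
    rw [hsum1, Finset.sum_eq_single i0
      (fun j _ hj => by rw [habar_coeff j hj]; ring)
      (fun h => absurd (Finset.mem_univ i0) h)] at hp
    exact hp.symm
  have hc0ne : dotProduct (hAbar.eigenvectorBasis i0 : Fin p → ℝ) xbar ≠ 0 := by
    intro h; rw [h] at hcsq; norm_num at hcsq
  -- quadratic form bounds for Abar
  have habar_perp : ∀ w : Fin p → ℝ, dotProduct xbar w = 0 →
      dotProduct w (Abar.mulVec w) ≤ (lam - dlam) * dotProduct w w := by
    intro w hw
    have hd0 : dotProduct (hAbar.eigenvectorBasis i0 : Fin p → ℝ) w = 0 := by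
      have hp := parseval₂ hAbar.eigenvectorBasis (WithLp.toLp 2 xbar) (WithLp.toLp 2 w)
      simp only [WithLp.ofLp_toLp] at hp
      rw [hw, Finset.sum_eq_single i0
        (fun j _ hj => by rw [habar_coeff j hj]; ring)
        (fun h => absurd (Finset.mem_univ i0) h)] at hp
      exact (mul_eq_zero.mp hp.symm).resolve_left hc0ne
    have e1 := dot_mulVec_eq hAbar (WithLp.toLp 2 w)
    have e2 := parseval hAbar.eigenvectorBasis (WithLp.toLp 2 w)
    simp only [WithLp.ofLp_toLp] at e1 e2
    rw [e1, e2, Finset.mul_sum]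
    refine Finset.sum_le_sum fun j _ => ?_
    by_cases hj : j = i0
    · subst hj; rw [hd0]; simp
    · exact mul_le_mul_of_nonneg_right (le_trans (le_abs_self _) (hgap_le j hj)) (sq_nonneg _)
  have habar_low : ∀ w : Fin p → ℝ,
      -(lam - dlam) * dotProduct w w ≤ dotProduct w (Abar.mulVec w) := by
    intro w
    have e1 := dot_mulVec_eq hAbar (WithLp.toLp 2 w)
    have e2 := parseval hAbar.eigenvectorBasis (WithLp.toLp 2 w)
    simp only [WithLp.ofLp_toLp] at e1 e2
    rw [e1, e2, Finset.mul_sum]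
    refine Finset.sum_le_sum fun j _ => ?_
    refine mul_le_mul_of_nonneg_right ?_ (sq_nonneg _)
    by_cases hj : j = i0
    · subst hj; rw [hi0]; linarith
    · linarith [neg_abs_le (hAbar.eigenvalues j), hgap_le j hj]
  -- pass to the submatrix
  set x : {i // i ∈ F} → ℝ := fun i => xbar i.val with hxdef
  have hextx : ext' F x = xbar := by
    funext i
    by_cases h : i ∈ F
    · simp [ext', h, hxdef]
    · simp [ext', h, hxoff i h]
  have hBle : ∀ u : {i // i ∈ F} → ℝ, dotProduct u x = 0 →
      dotProduct u ((Abar.submatrix (Subtype.val : {i // i ∈ F} → Fin p) (Subtype.val : {i // i ∈ F} → Fin p)).mulVec u)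
        ≤ (lam - dlam) * dotProduct u u := by
    intro u hu
    have hxu : dotProduct xbar (ext' F u) = 0 := by
      rw [dotProduct_comm]
      calc dotProduct (ext' F u) xbar
          = ∑ i : {i // i ∈ F}, u i * xbar i.val := sum_ext_mul F u xbar
        _ = dotProduct u x := rfl
        _ = 0 := hu
    have h1 := habar_perp (ext' F u) hxu
    rwa [quad_ext Abar F u, dot_ext_ext F u u] at h1
  have hBlow : ∀ u : {i // i ∈ F} → ℝ,
      -(lam - dlam) * dotProduct u u
        ≤ dotProduct u ((Abar.submatrix (Subtype.val : {i // i ∈ F} → Fin p) (Subtype.val : {i // i ∈ F} → Fin p)).mulVec u) := by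
    intro u
    have h1 := habar_low (ext' F u)
    rwa [quad_ext Abar F u, dot_ext_ext F u u] at h1
  have hBx : dotProduct x ((Abar.submatrix (Subtype.val : {i // i ∈ F} → Fin p) (Subtype.val : {i // i ∈ F} → Fin p)).mulVec x) = lam := by
    calc dotProduct x ((Abar.submatrix (Subtype.val : {i // i ∈ F} → Fin p) (Subtype.val : {i // i ∈ F} → Fin p)).mulVec x)
        = dotProduct (ext' F x) (Abar.mulVec (ext' F x)) := (quad_ext Abar F x).symm
      _ = dotProduct xbar (Abar.mulVec xbar) := by rw [hextx]
      _ = dotProduct xbar (lam • xbar) := by rw [hxbar_eig]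
      _ = lam * dotProduct xbar xbar := by rw [dotProduct_smul, smul_eq_mul]
      _ = lam := by rw [hsum1, mul_one]
  have hxx1 : dotProduct x x = 1 := by
    rw [← dot_ext_ext F x x, hextx, hsum1]
  -- bounds for the E-part
  have hCherm : (E.submatrix (Subtype.val : {i // i ∈ F} → Fin p) (Subtype.val : {i // i ∈ F} → Fin p)).IsHermitian :=
    hE.submatrix _
  have hsnle : specNorm (subm E F) ≤ ρ := by
    rw [hρdef]
    have hsub : {r : ℝ | ∃ F' : Finset (Fin p), F'.card = s ∧ r = specNorm (subm E F')} ⊆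
        Set.range (fun F' : Finset (Fin p) => specNorm (subm E F')) := by
      rintro r ⟨F', _, rfl⟩; exact ⟨F', rfl⟩
    exact le_csSup ((Set.finite_range _).subset hsub).bddAbove ⟨F, hFcard, rfl⟩
  have hCabs : ∀ u : {i // i ∈ F} → ℝ,
      |dotProduct u ((E.submatrix (Subtype.val : {i // i ∈ F} → Fin p) (Subtype.val : {i // i ∈ F} → Fin p)).mulVec u)|
        ≤ ρ * dotProduct u u := by
    intro u
    refine rayleigh_abs_le hCherm u fun j => le_trans (abs_eig_le_specNorm hCherm j) hsnle
  have hρ0 : 0 ≤ ρ :=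
    le_trans (le_trans (abs_nonneg _) (abs_eig_le_specNorm hCherm (Classical.arbitrary {i // i ∈ F}))) hsnle
  -- the perturbed submatrix
  set hM := ((hAbar.add hE).submatrix (Subtype.val : {i // i ∈ F} → Fin p)) with hMdef
  have hMsplit : (Abar + E).submatrix (Subtype.val : {i // i ∈ F} → Fin p) (Subtype.val : {i // i ∈ F} → Fin p)
      = Abar.submatrix (Subtype.val : {i // i ∈ F} → Fin p) (Subtype.val : {i // i ∈ F} → Fin p) + E.submatrix (Subtype.val : {i // i ∈ F} → Fin p) (Subtype.val : {i // i ∈ F} → Fin p) := by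
    ext i j; simp [Matrix.submatrix_apply]
  have hquadM : ∀ u : {i // i ∈ F} → ℝ,
      dotProduct u (((Abar + E).submatrix
          (Subtype.val : {i // i ∈ F} → Fin p) (Subtype.val : {i // i ∈ F} → Fin p)).mulVec u)
        = dotProduct u ((Abar.submatrix (Subtype.val : {i // i ∈ F} → Fin p) (Subtype.val : {i // i ∈ F} → Fin p)).mulVec u)
          + dotProduct u ((E.submatrix (Subtype.val : {i // i ∈ F} → Fin p) (Subtype.val : {i // i ∈ F} → Fin p)).mulVec u) := by
    intro u
    rw [hMsplit, Matrix.add_mulVec, dotProduct_add]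
  have heig_unit : ∀ j, dotProduct (hM.eigenvectorBasis j : {i // i ∈ F} → ℝ)
      (hM.eigenvectorBasis j) = 1 := by
    intro j; rw [dot_orthonormal hM.eigenvectorBasis j j]; simp
  have heig_quad : ∀ j, dotProduct (hM.eigenvectorBasis j : {i // i ∈ F} → ℝ)
      (((Abar + E).submatrix (Subtype.val : {i // i ∈ F} → Fin p) (Subtype.val : {i // i ∈ F} → Fin p)).mulVec
        (hM.eigenvectorBasis j)) = hM.eigenvalues j := by
    intro j
    rw [show ((Abar + E).submatrix (Subtype.val : {i // i ∈ F} → Fin p) (Subtype.val : {i // i ∈ F} → Fin p)).mulVec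
          (hM.eigenvectorBasis j)
        = hM.eigenvalues j • (hM.eigenvectorBasis j : {i // i ∈ F} → ℝ)
      from hM.mulVec_eigenvectorBasis j]
    rw [dotProduct_smul, smul_eq_mul, heig_unit j, mul_one]
  -- eigenvalue bounds for the perturbed submatrix
  have hμlow : ∀ j, -(lam - dlam + ρ) ≤ hM.eigenvalues j := by
    intro j
    have h1 := hBlow (hM.eigenvectorBasis j)
    have h2 := hCabs (hM.eigenvectorBasis j)
    rw [heig_unit j] at h1 h2
    have h3 := (abs_le.mp h2).1
    have h4 := hquadM (hM.eigenvectorBasis j)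
    rw [heig_quad j] at h4
    rw [mul_one] at h1 h3
    linarith
  have hμtop : ∀ a, (∀ j, hM.eigenvalues j ≤ a) → lam - ρ ≤ a := by
    intro a ha
    have h1 := rayleigh_le hM x ha
    rw [hxx1, mul_one] at h1
    have h2 := hquadM x
    rw [hBx] at h2
    have h3 := (abs_le.mp (hCabs x)).1
    rw [hxx1, mul_one] at h3
    linarith
  have hsecond : ∀ j0 j1 : {i // i ∈ F}, j0 ≠ j1 → hM.eigenvalues j1 ≤ hM.eigenvalues j0 →
      hM.eigenvalues j1 ≤ lam - dlam + ρ := by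
    intro j0 j1 hne12 hle12
    set c0 := dotProduct (hM.eigenvectorBasis j0 : {i // i ∈ F} → ℝ) x with hc0
    set c1 := dotProduct (hM.eigenvectorBasis j1 : {i // i ∈ F} → ℝ) x with hc1
    by_cases hc1z : c1 = 0
    · -- e j1 itself is orthogonal to x
      have hb := hBle (hM.eigenvectorBasis j1) hc1z
      have hc := (abs_le.mp (hCabs (hM.eigenvectorBasis j1))).2
      rw [heig_unit j1, mul_one] at hb hc
      have h4 := hquadM (hM.eigenvectorBasis j1)
      rw [heig_quad j1] at h4
      linarith
    · set u : {i // i ∈ F} → ℝ := c1 • (hM.eigenvectorBasis j0 : {i // i ∈ F} → ℝ)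
        - c0 • (hM.eigenvectorBasis j1 : {i // i ∈ F} → ℝ) with hu
      have hux : dotProduct u x = 0 := by
        rw [hu, sub_dotProduct, smul_dotProduct, smul_dotProduct,
          ← hc0, ← hc1, smul_eq_mul, smul_eq_mul]
        ring
      have hd00 := dot_orthonormal hM.eigenvectorBasis j0 j0
      have hd11 := dot_orthonormal hM.eigenvectorBasis j1 j1
      have hd01 := dot_orthonormal hM.eigenvectorBasis j0 j1
      have hd10 := dot_orthonormal hM.eigenvectorBasis j1 j0
      rw [if_pos rfl] at hd00 hd11
      rw [if_neg hne12] at hd01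
      rw [if_neg (Ne.symm hne12)] at hd10
      have huu : dotProduct u u = c1 ^ 2 + c0 ^ 2 := by
        rw [hu, sub_dotProduct, smul_dotProduct, smul_dotProduct,
          dotProduct_sub, dotProduct_sub, dotProduct_smul,
          dotProduct_smul, dotProduct_smul, dotProduct_smul,
          hd00, hd11, hd01, hd10]
        simp only [smul_eq_mul]
        ring
      have hm0 : ((Abar + E).submatrix (Subtype.val : {i // i ∈ F} → Fin p)
            (Subtype.val : {i // i ∈ F} → Fin p)).mulVec (hM.eigenvectorBasis j0)
          = hM.eigenvalues j0 • (hM.eigenvectorBasis j0 : {i // i ∈ F} → ℝ) :=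
        hM.mulVec_eigenvectorBasis j0
      have hm1 : ((Abar + E).submatrix (Subtype.val : {i // i ∈ F} → Fin p)
            (Subtype.val : {i // i ∈ F} → Fin p)).mulVec (hM.eigenvectorBasis j1)
          = hM.eigenvalues j1 • (hM.eigenvectorBasis j1 : {i // i ∈ F} → ℝ) :=
        hM.mulVec_eigenvectorBasis j1
      have hMu : dotProduct u (((Abar + E).submatrix
            (Subtype.val : {i // i ∈ F} → Fin p) (Subtype.val : {i // i ∈ F} → Fin p)).mulVec u)
          = c1 ^ 2 * hM.eigenvalues j0 + c0 ^ 2 * hM.eigenvalues j1 := by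
        rw [hu, Matrix.mulVec_sub, Matrix.mulVec_smul, Matrix.mulVec_smul, hm0, hm1,
          sub_dotProduct, smul_dotProduct, smul_dotProduct,
          dotProduct_sub, dotProduct_sub,
          dotProduct_smul, dotProduct_smul, dotProduct_smul,
          dotProduct_smul, dotProduct_smul, dotProduct_smul,
          dotProduct_smul, dotProduct_smul,
          hd00, hd11, hd01, hd10]
        simp only [smul_eq_mul]
        ring
      have hb := hBle u hux
      have hc := (abs_le.mp (hCabs u)).2
      have h4 := hquadM u
      rw [hMu] at h4
      have hpos : 0 < c1 ^ 2 + c0 ^ 2 := by positivity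
      have hmul : c1 ^ 2 * hM.eigenvalues j1 ≤ c1 ^ 2 * hM.eigenvalues j0 :=
        mul_le_mul_of_nonneg_left hle12 (sq_nonneg c1)
      rw [huu] at hb hc
      have hkey : (c1 ^ 2 + c0 ^ 2) * hM.eigenvalues j1
          ≤ (c1 ^ 2 + c0 ^ 2) * (lam - dlam + ρ) := by nlinarith
      exact le_of_mul_le_mul_left hkey hpos
  -- now analyze the sorted list of eigenvalues
  have hml : ((eigList hM : List ℝ) : Multiset ℝ)
      = Multiset.map hM.eigenvalues Finset.univ.val := by
    rw [eigList, Multiset.coe_reverse, Multiset.sort_eq]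
  have hsorted : (eigList hM).Pairwise (fun a b => b ≤ a) := by
    rw [eigList]
    exact List.pairwise_reverse.mpr (Multiset.pairwise_sort _ _)
  have hlne : eigList hM ≠ [] := by
    intro h
    have hcard := congrArg Multiset.card hml
    rw [h] at hcard
    simp only [Multiset.coe_nil, Multiset.card_zero, Multiset.card_map] at hcard
    have hpos : 0 < Fintype.card {i // i ∈ F} := Fintype.card_pos
    rw [← Finset.card_univ, Finset.card] at hpos
    omega
  obtain ⟨a, t, hlat⟩ := List.exists_cons_of_ne_nil hlne
  have hcons : Multiset.map hM.eigenvalues Finset.univ.val = a ::ₘ (↑t : Multiset ℝ) := by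
    rw [← hml, hlat, ← Multiset.cons_coe]
  obtain ⟨j0, hj0mem, hj0eq, hj0rest⟩ := (Multiset.map_eq_cons _ _ _ _).mpr hcons
  have hsorted' := hsorted
  rw [hlat, List.pairwise_cons] at hsorted'
  have hall_le_a : ∀ j, hM.eigenvalues j ≤ a := by
    intro j
    have hmem : hM.eigenvalues j ∈ Multiset.map hM.eigenvalues Finset.univ.val :=
      Multiset.mem_map.mpr ⟨j, Finset.mem_univ_val j, rfl⟩
    rw [hcons, Multiset.mem_cons] at hmem
    rcases hmem with h | h
    · exact le_of_eq h
    · exact hsorted'.1 _ (Multiset.mem_coe.mp h)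
  have htop : lam - ρ ≤ a := hμtop a hall_le_a
  have hgden : 0 < lam - ρ := by linarith
  have hapos : 0 < a := by linarith
  have hgs0 : 0 ≤ gs := by
    rw [hgs]
    exact div_nonneg (by linarith) (by linarith)
  have hgsmul : gs * (lam - ρ) = lam - dlam + ρ := by
    rw [hgs]
    field_simp
  have hgsa : lam - dlam + ρ ≤ gs * a :=
    hgsmul ▸ mul_le_mul_of_nonneg_left htop hgs0
  constructor
  · rw [hlat]
    exact hapos
  · intro r hr
    rw [hlat] at hr ⊢
    simp only [List.tail_cons] at hr
    simp only [List.headI]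
    -- lower bound on r
    have hrmem : r ∈ Multiset.map hM.eigenvalues Finset.univ.val := by
      rw [hcons, Multiset.mem_cons]
      exact Or.inr (Multiset.mem_coe.mpr hr)
    obtain ⟨jr, _, hjr⟩ := Multiset.mem_map.mp hrmem
    have hlow : -(lam - dlam + ρ) ≤ r := hjr ▸ hμlow jr
    -- upper bound on r
    obtain ⟨b, t', hbt⟩ := List.exists_cons_of_ne_nil (List.ne_nil_of_mem hr)
    have hj1ex : ∃ j1, j1 ≠ j0 ∧ hM.eigenvalues j1 = b := by
      have hmc : Multiset.map hM.eigenvalues (Finset.univ.val.erase j0)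
          = b ::ₘ (↑t' : Multiset ℝ) := by
        rw [hj0rest, hbt, ← Multiset.cons_coe]
      obtain ⟨j1, hj1mem, hj1eq, _⟩ := (Multiset.map_eq_cons _ _ _ _).mpr hmc
      refine ⟨j1, fun hq => ?_, hj1eq⟩
      exact Multiset.Nodup.notMem_erase Finset.univ.nodup (hq ▸ hj1mem)
    obtain ⟨j1, hj1ne, hj1eq⟩ := hj1ex
    have hble : b ≤ lam - dlam + ρ := by
      have h1 : hM.eigenvalues j1 ≤ hM.eigenvalues j0 := by
        rw [hj1eq, hj0eq]
        exact hsorted'.1 b (hbt ▸ (List.mem_cons_self (a := b) (l := t')))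
      have := hsecond j0 j1 (Ne.symm hj1ne) h1
      rwa [hj1eq] at this
    have hrb : r ≤ b := by
      have hst := hsorted'.2
      rw [hbt, List.pairwise_cons] at hst
      rw [hbt] at hr
      rcases List.mem_cons.mp hr with h | h
      · exact le_of_eq h
      · exact hst.1 r h
    have habs : |r| ≤ lam - dlam + ρ := abs_le.mpr ⟨hlow, by linarith⟩
    linarith

end TPaper
end

section
/- Let F be an index set with supp(x̄) ⊆ F and |F| = s, and assume ρ(E,s) ≤ Δλ/2. Let x(F) be any unit vector supported on F that maximizes xᵀAx over unit vectors supported on F (equivalently, a unit leading eigenvector of A_F extended by zeros). Then, for an appropriate choice of sign, min(‖x(F) - x̄‖, ‖x(F) + x̄‖) ≤ δ(s). -/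
namespace TPaper

open Matrix

open Matrix in
lemma abs_eig_le_specNorm_s3 {n : Type*} [Fintype n] [DecidableEq n] {B : Matrix n n ℝ}
    (hB : B.IsHermitian) (i : n) : |hB.eigenvalues i| ≤ specNorm B := by
  apply le_csSup
  · have h : {r : ℝ | ∃ μ ∈ spectrum ℝ B, r = |μ|} = (fun μ => |μ|) '' (spectrum ℝ B) := by
      ext r; simp [eq_comm]
    rw [h]
    exact ((Matrix.finite_real_spectrum (𝕜 := ℝ) (A := B)).image _).bddAbove
  · exact ⟨_, hB.eigenvalues_mem_spectrum_real i, rfl⟩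

open Matrix in
lemma herm_dot_swap {n : Type*} [Fintype n] {B : Matrix n n ℝ}
    (hB : B.IsHermitian) (x y : n → ℝ) :
    x ⬝ᵥ (B *ᵥ y) = (B *ᵥ x) ⬝ᵥ y := by
  have hBt : Bᵀ = B := by
    rw [Matrix.IsHermitian, conjTranspose_eq_transpose_of_trivial] at hB
    exact hB
  rw [dotProduct_mulVec, ← mulVec_transpose, hBt]

open Matrix in
lemma inner_real_eq_dot {n : Type*} [Fintype n] (X Y : EuclideanSpace ℝ n) :
    (inner ℝ X Y : ℝ) = (X : n → ℝ) ⬝ᵥ (Y : n → ℝ) := by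
  simp [PiLp.inner_apply, RCLike.inner_apply, dotProduct, mul_comm]

lemma dot_eq_sum_coeff {n : Type*} [Fintype n] [DecidableEq n] {B : Matrix n n ℝ}
    (hB : B.IsHermitian) (x y : n → ℝ) :
    x ⬝ᵥ (B *ᵥ y) = ∑ i, hB.eigenvalues i *
      (((hB.eigenvectorBasis i : n → ℝ) ⬝ᵥ x) * ((hB.eigenvectorBasis i : n → ℝ) ⬝ᵥ y)) := by
  classical
  set b := hB.eigenvectorBasis
  have key := b.sum_inner_mul_inner (𝕜 := ℝ) (WithLp.toLp 2 x : EuclideanSpace ℝ n) (WithLp.toLp 2 (B *ᵥ y : n → ℝ) : EuclideanSpace ℝ n)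
  rw [inner_real_eq_dot] at key
  simp only [WithLp.ofLp_toLp] at key
  rw [← key]
  congr 1
  ext i
  rw [inner_real_eq_dot, inner_real_eq_dot]
  simp only [WithLp.ofLp_toLp]
  have h1 : (b i : n → ℝ) ⬝ᵥ (B *ᵥ y) = (B *ᵥ (b i : n → ℝ)) ⬝ᵥ y := herm_dot_swap hB _ y
  have h2 : B *ᵥ (b i : n → ℝ) = hB.eigenvalues i • (b i : n → ℝ) := hB.mulVec_eigenvectorBasis i
  rw [h1, h2, smul_dotProduct]
  rw [dotProduct_comm (x : n → ℝ), smul_eq_mul]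
  ring

lemma parseval_dot {n : Type*} [Fintype n] [DecidableEq n] {B : Matrix n n ℝ}
    (hB : B.IsHermitian) (x y : n → ℝ) :
    ∑ i, (((hB.eigenvectorBasis i : n → ℝ) ⬝ᵥ x) * ((hB.eigenvectorBasis i : n → ℝ) ⬝ᵥ y))
      = x ⬝ᵥ y := by
  have key := hB.eigenvectorBasis.sum_inner_mul_inner (𝕜 := ℝ)
    (WithLp.toLp 2 x : EuclideanSpace ℝ n) (WithLp.toLp 2 y : EuclideanSpace ℝ n)
  rw [inner_real_eq_dot] at key
  simp only [WithLp.ofLp_toLp] at key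
  rw [← key]
  congr 1; ext i
  rw [inner_real_eq_dot, inner_real_eq_dot]
  simp only [WithLp.ofLp_toLp]
  rw [dotProduct_comm (x : n → ℝ)]

lemma bilin_bound {n : Type*} [Fintype n] [DecidableEq n] [Nonempty n] {B : Matrix n n ℝ}
    (hB : B.IsHermitian) (x y : n → ℝ) :
    |x ⬝ᵥ (B *ᵥ y)| ≤ specNorm B * (Real.sqrt (∑ i, x i ^ 2) * Real.sqrt (∑ i, y i ^ 2)) := by
  classical
  set M := specNorm B with hM
  have hM0 : 0 ≤ M := le_trans (abs_nonneg _) (abs_eig_le_specNorm_s3 hB (Classical.arbitrary n))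
  set c : n → ℝ := fun i => (hB.eigenvectorBasis i : n → ℝ) ⬝ᵥ x with hc
  set d : n → ℝ := fun i => (hB.eigenvectorBasis i : n → ℝ) ⬝ᵥ y with hd
  have hcx : ∑ i, |c i| ^ 2 = ∑ i, x i ^ 2 := by
    calc ∑ i, |c i| ^ 2 = ∑ i, c i * c i := by
          refine Finset.sum_congr rfl fun i _ => by rw [sq_abs, pow_two]
      _ = x ⬝ᵥ x := parseval_dot hB x x
      _ = ∑ i, x i ^ 2 := by
          refine Finset.sum_congr rfl fun i _ => by rw [pow_two]
  have hdy : ∑ i, |d i| ^ 2 = ∑ i, y i ^ 2 := by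
    calc ∑ i, |d i| ^ 2 = ∑ i, d i * d i := by
          refine Finset.sum_congr rfl fun i _ => by rw [sq_abs, pow_two]
      _ = y ⬝ᵥ y := parseval_dot hB y y
      _ = ∑ i, y i ^ 2 := by
          refine Finset.sum_congr rfl fun i _ => by rw [pow_two]
  rw [dot_eq_sum_coeff hB x y]
  calc |∑ i, hB.eigenvalues i * (c i * d i)|
      ≤ ∑ i, |hB.eigenvalues i * (c i * d i)| := Finset.abs_sum_le_sum_abs _ _
    _ ≤ ∑ i, M * (|c i| * |d i|) := by
        apply Finset.sum_le_sum
        intro i _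
        rw [abs_mul, abs_mul]
        exact mul_le_mul_of_nonneg_right (abs_eig_le_specNorm_s3 hB i)
          (mul_nonneg (abs_nonneg _) (abs_nonneg _))
    _ = M * ∑ i, |c i| * |d i| := by rw [Finset.mul_sum]
    _ ≤ M * (Real.sqrt (∑ i, x i ^ 2) * Real.sqrt (∑ i, y i ^ 2)) := by
        apply mul_le_mul_of_nonneg_left _ hM0
        calc ∑ i, |c i| * |d i|
            ≤ Real.sqrt (∑ i, |c i| ^ 2) * Real.sqrt (∑ i, |d i| ^ 2) :=
              Real.sum_mul_le_sqrt_mul_sqrt Finset.univ _ _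
          _ = Real.sqrt (∑ i, x i ^ 2) * Real.sqrt (∑ i, y i ^ 2) := by rw [hcx, hdy]

lemma gap_bound {p : ℕ} {Abar : Matrix (Fin p) (Fin p) ℝ} (hAbar : Abar.IsHermitian)
    {lam dlam : ℝ} {i0 : Fin p}
    (hi0 : hAbar.eigenvalues i0 = lam)
    (hlam_pos : 0 < lam) (hdlam_pos : 0 < dlam)
    (hgap_le : ∀ j, j ≠ i0 → |hAbar.eigenvalues j| ≤ lam - dlam)
    {xbar : Fin p → ℝ}
    (hxbar_eig : Abar.mulVec xbar = lam • xbar)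
    (hxbar_unit : xbar ⬝ᵥ xbar = 1)
    (w : Fin p → ℝ) (horth : xbar ⬝ᵥ w = 0) :
    w ⬝ᵥ (Abar *ᵥ w) ≤ (lam - dlam) * (w ⬝ᵥ w) := by
  classical
  set b := hAbar.eigenvectorBasis with hb
  set μ := hAbar.eigenvalues with hμ
  set e : Fin p → ℝ := fun i => (b i : Fin p → ℝ) ⬝ᵥ xbar with he
  set c : Fin p → ℝ := fun i => (b i : Fin p → ℝ) ⬝ᵥ w with hc
  -- eigen-coefficients of xbar vanish off i0
  have heig : ∀ i, μ i * e i = lam * e i := by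
    intro i
    have h1 : (b i : Fin p → ℝ) ⬝ᵥ (Abar *ᵥ xbar) = (Abar *ᵥ (b i : Fin p → ℝ)) ⬝ᵥ xbar :=
      herm_dot_swap hAbar _ _
    have h2 : Abar *ᵥ (b i : Fin p → ℝ) = μ i • (b i : Fin p → ℝ) :=
      hAbar.mulVec_eigenvectorBasis i
    rw [h2, smul_dotProduct, hxbar_eig, dotProduct_smul] at h1
    simpa [smul_eq_mul] using h1.symm
  have hzero : ∀ i, i ≠ i0 → e i = 0 := by
    intro i hi
    have hne : μ i ≠ lam := by
      intro h
      have := hgap_le i hi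
      rw [h, abs_of_pos hlam_pos] at this
      linarith
    have := heig i
    rcases mul_eq_mul_right_iff.1 this with h | h
    · exact absurd h hne
    · exact h
  have hei0 : e i0 * e i0 = 1 := by
    have hp : ∑ i, e i * e i = 1 := by
      have := parseval_dot hAbar xbar xbar
      rw [hxbar_unit] at this
      exact this
    rw [← hp, ← Finset.sum_subset (Finset.subset_univ {i0})]
    · simp
    · intro i _ hi
      simp only [Finset.mem_singleton] at hi
      rw [hzero i hi]; ring
  have hci0 : c i0 = 0 := by
    have hp : ∑ i, e i * c i = 0 := by
      have := parseval_dot hAbar xbar w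
      rw [horth] at this
      exact this
    have : ∑ i, e i * c i = e i0 * c i0 := by
      rw [← Finset.sum_subset (Finset.subset_univ {i0})]
      · simp
      · intro i _ hi
        simp only [Finset.mem_singleton] at hi
        rw [hzero i hi]; ring
    rw [this] at hp
    have hei0ne : e i0 ≠ 0 := by
      intro h; rw [h] at hei0; simp at hei0
    have := mul_eq_zero.1 hp
    tauto
  have hww : ∑ i, c i * c i = w ⬝ᵥ w := parseval_dot hAbar w w
  have hq : w ⬝ᵥ (Abar *ᵥ w) = ∑ i, μ i * (c i * c i) := dot_eq_sum_coeff hAbar w w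
  rw [hq, ← hww, Finset.mul_sum]
  apply Finset.sum_le_sum
  intro i _
  by_cases hi : i = i0
  · subst hi
    rw [hci0]
    simp
  · have h1 : μ i ≤ lam - dlam := (abs_le.1 (hgap_le i hi)).2
    have h2 : 0 ≤ c i * c i := mul_self_nonneg _
    exact mul_le_mul_of_nonneg_right h1 h2

lemma sum_sq_eq_dot {n : Type*} [Fintype n] (x : n → ℝ) : ∑ i, x i ^ 2 = x ⬝ᵥ x :=
  Finset.sum_congr rfl fun i _ => by rw [pow_two]

lemma sum_sq_restrict {p : ℕ} (F : Finset (Fin p)) (x : Fin p → ℝ)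
    (hx : ∀ i ∉ F, x i = 0) :
    ∑ i : {i // i ∈ F}, (x i.val) ^ 2 = ∑ i, x i ^ 2 := by
  rw [Finset.sum_coe_sort F (fun i => x i ^ 2)]
  exact Finset.sum_subset (Finset.subset_univ F) (fun i _ hi => by rw [hx i hi]; ring)

lemma dot_restrict {p : ℕ} (E : Matrix (Fin p) (Fin p) ℝ) (F : Finset (Fin p))
    (x y : Fin p → ℝ) (hx : ∀ i ∉ F, x i = 0) (hy : ∀ i ∉ F, y i = 0) :
    x ⬝ᵥ (E *ᵥ y) =
      (fun i : {i // i ∈ F} => x i.val) ⬝ᵥ ((subm E F) *ᵥ (fun i : {i // i ∈ F} => y i.val)) := by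
  have inner_eq : ∀ a : Fin p, (∑ j : {i // i ∈ F}, E a j.val * y j.val) = ∑ j, E a j * y j := by
    intro a
    rw [Finset.sum_coe_sort F (fun j => E a j * y j)]
    exact Finset.sum_subset (Finset.subset_univ F) (fun j _ hj => by rw [hy j hj]; ring)
  calc x ⬝ᵥ (E *ᵥ y) = ∑ a, x a * ∑ j, E a j * y j := rfl
    _ = ∑ a ∈ F, x a * ∑ j, E a j * y j :=
        (Finset.sum_subset (Finset.subset_univ F) (fun a _ ha => by rw [hx a ha]; ring)).symm
    _ = ∑ a ∈ F, x a * ∑ j : {i // i ∈ F}, E a j.val * y j.val :=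
        Finset.sum_congr rfl (fun a _ => by rw [inner_eq a])
    _ = ∑ a : {i // i ∈ F}, x a.val * ∑ j : {i // i ∈ F}, E a.val j.val * y j.val :=
        (Finset.sum_coe_sort F (fun a => x a * ∑ j : {i // i ∈ F}, E a j.val * y j.val)).symm
    _ = _ := rfl

lemma specNorm_subm_le_rhoRes {p s : ℕ} (E : Matrix (Fin p) (Fin p) ℝ)
    (F : Finset (Fin p)) (hF : F.card = s) :
    specNorm (subm E F) ≤ rhoRes E s := by
  apply le_csSup
  · have h : {r : ℝ | ∃ G : Finset (Fin p), G.card = s ∧ r = specNorm (subm E G)} =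
        (fun G => specNorm (subm E G)) '' {G : Finset (Fin p) | G.card = s} := by
      ext r
      simp only [Set.mem_setOf_eq, Set.mem_image]
      constructor
      · rintro ⟨G, hG, rfl⟩; exact ⟨G, hG, rfl⟩
      · rintro ⟨G, hG, rfl⟩; exact ⟨G, hG, rfl⟩
    rw [h]
    exact ((Set.toFinite _).image _).bddAbove
  · exact ⟨F, hF, rfl⟩

lemma specNorm_nonneg {n : Type*} [Fintype n] [DecidableEq n] [Nonempty n]
    {B : Matrix n n ℝ} (hB : B.IsHermitian) : 0 ≤ specNorm B :=
  le_trans (abs_nonneg _) (abs_eig_le_specNorm_s3 hB (Classical.arbitrary n))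

set_option maxHeartbeats 2000000 in
theorem statement3 (p kbar s : ℕ)
    (Abar E : Matrix (Fin p) (Fin p) ℝ)
    (hAbar : Abar.IsHermitian) (hE : E.IsHermitian)
    (lam dlam : ℝ) (i0 : Fin p)
    (hi0 : hAbar.eigenvalues i0 = lam)
    (hlam_pos : 0 < lam) (hdlam_pos : 0 < dlam)
    (hgap_le : ∀ j, j ≠ i0 → |hAbar.eigenvalues j| ≤ lam - dlam)
    (hgap_eq : ∃ j, j ≠ i0 ∧ |hAbar.eigenvalues j| = lam - dlam)
    (xbar : Fin p → ℝ)
    (hxbar_eig : Abar.mulVec xbar = lam • xbar)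
    (hxbar_norm : nrm2 xbar = 1)
    (hxbar_supp : (supp xbar).card = kbar)
    (F : Finset (Fin p)) (hFsupp : supp xbar ⊆ F) (hFcard : F.card = s)
    (hrho : rhoRes E s ≤ dlam / 2)
    (ds : ℝ)
    (hds : ds = Real.sqrt 2 * rhoRes E s /
      Real.sqrt ((rhoRes E s) ^ 2 + (dlam - 2 * rhoRes E s) ^ 2))
    (xF : Fin p → ℝ) (hxFsupp : supp xF ⊆ F) (hxFnorm : nrm2 xF = 1)
    (hxFmax : ∀ z : Fin p → ℝ, supp z ⊆ F → nrm2 z = 1 →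
      dotp z ((Abar + E).mulVec z) ≤ dotp xF ((Abar + E).mulVec xF)) :
    min (nrm2 (xF - xbar)) (nrm2 (xF + xbar)) ≤ ds := by
  classical
  set u := xbar with hu
  set v := xF with hv
  set A := Abar + E with hA
  have hAherm : A.IsHermitian := hAbar.add hE
  clear_value u v A
  -- squared norms
  have hu2 : ∑ i, u i ^ 2 = 1 := Real.sqrt_eq_one.mp hxbar_norm
  have hv2 : ∑ i, v i ^ 2 = 1 := Real.sqrt_eq_one.mp hxFnorm
  have huu : u ⬝ᵥ u = 1 := by rw [← sum_sq_eq_dot]; exact hu2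
  have hvv : v ⬝ᵥ v = 1 := by rw [← sum_sq_eq_dot]; exact hv2
  -- support facts
  have hu0 : ∀ i ∉ F, u i = 0 := by
    intro i hi
    by_contra h
    exact hi (hFsupp (by simp [supp, h]))
  have hv0 : ∀ i ∉ F, v i = 0 := by
    intro i hi
    by_contra h
    exact hi (hxFsupp (by simp [supp, h]))
  -- F is nonempty
  have hFne : ∃ i, i ∈ F := by
    by_contra h
    push_neg at h
    have : ∀ i, u i = 0 := fun i => hu0 i (h i)
    have : ∑ i, u i ^ 2 = 0 := by
      apply Finset.sum_eq_zero; intro i _; rw [this i]; ring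
    rw [hu2] at this; norm_num at this
  have : Nonempty {i // i ∈ F} := ⟨⟨hFne.choose, hFne.choose_spec⟩⟩
  set ρ := rhoRes E s with hρ
  have hρ0 : 0 ≤ ρ :=
    le_trans (specNorm_nonneg (hE.submatrix _)) (specNorm_subm_le_rhoRes E F hFcard)
  -- quadratic form bound for E on F-supported vectors
  have Ebound : ∀ x y : Fin p → ℝ, (∀ i ∉ F, x i = 0) → (∀ i ∉ F, y i = 0) →
      |x ⬝ᵥ (E *ᵥ y)| ≤ ρ * (Real.sqrt (∑ i, x i ^ 2) * Real.sqrt (∑ i, y i ^ 2)) := by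
    intro x y hx hy
    rw [dot_restrict E F x y hx hy]
    refine le_trans (bilin_bound (hE.submatrix _) _ _) ?_
    rw [sum_sq_restrict F x hx, sum_sq_restrict F y hy]
    exact mul_le_mul_of_nonneg_right (specNorm_subm_le_rhoRes E F hFcard) (by positivity)
  have hg0 : 0 ≤ dlam - 2 * ρ := by linarith
  have hh2 : 0 < ρ ^ 2 + (dlam - 2 * ρ) ^ 2 := by
    nlinarith [sq_nonneg (5 * ρ - 2 * dlam), sq_nonneg ρ, sq_nonneg (dlam - 2 * ρ)]
  have hds0 : 0 ≤ ds := by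
    rw [hds]
    have := Real.sqrt_nonneg ((rhoRes E s) ^ 2 + (dlam - 2 * rhoRes E s) ^ 2)
    positivity
  clear_value ρ
  have hds2 : ds ^ 2 = 2 * ρ ^ 2 / (ρ ^ 2 + (dlam - 2 * ρ) ^ 2) := by
    rw [hds, div_pow, mul_pow, Real.sq_sqrt (by norm_num : (0:ℝ) ≤ 2),
      Real.sq_sqrt (le_of_lt hh2)]
  set c := v ⬝ᵥ u with hc
  have huv : u ⬝ᵥ v = c := dotProduct_comm u v
  clear_value c
  have hc2le : c ^ 2 ≤ 1 := by
    have := Finset.sum_mul_sq_le_sq_mul_sq Finset.univ v u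
    have hd : (∑ i, v i * u i) = c := hc.symm
    rw [hd] at this
    calc c ^ 2 ≤ (∑ i, v i ^ 2) * ∑ i, u i ^ 2 := this
      _ = 1 := by rw [hu2, hv2]; ring
  have hcabs : |c| ≤ 1 := (sq_le_one_iff_abs_le_one c).mp hc2le
  -- THE KEY INEQUALITY
  have key : (1 - c ^ 2) * (ρ ^ 2 + (dlam - 2 * ρ) ^ 2) ≤ ρ ^ 2 := by
    rcases eq_or_lt_of_le hc2le with heq | hlt
    · rw [heq]
      simpa using sq_nonneg ρ
    · -- main case
      have hs2pos : 0 < 1 - c ^ 2 := by linarith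
      set s' := Real.sqrt (1 - c ^ 2) with hs'
      have hs'pos : 0 < s' := Real.sqrt_pos.2 hs2pos
      have hs'ne : s' ≠ 0 := ne_of_gt hs'pos
      have hs'sq : s' ^ 2 = 1 - c ^ 2 := Real.sq_sqrt (le_of_lt hs2pos)
      have hcs1 : c ^ 2 + s' ^ 2 = 1 := by rw [hs'sq]; ring
      clear_value s'
      set w : Fin p → ℝ := s'⁻¹ • (v - c • u) with hw
      have hsw : s' • w = v - c • u := by
        rw [hw, smul_smul, mul_inv_cancel₀ hs'ne, one_smul]
      have hvw : v = c • u + s' • w := by rw [hsw]; abel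
      have hudotvc : u ⬝ᵥ (v - c • u) = 0 := by
        rw [dotProduct_sub, dotProduct_smul, huv, huu, smul_eq_mul]; ring
      have huw : u ⬝ᵥ w = 0 := by
        have h1 : u ⬝ᵥ (s' • w) = 0 := by rw [hsw]; exact hudotvc
        rw [dotProduct_smul, smul_eq_mul] at h1
        exact (mul_eq_zero.1 h1).resolve_left hs'ne
      have hvcvc : (v - c • u) ⬝ᵥ (v - c • u) = 1 - c ^ 2 := by
        simp only [sub_dotProduct, dotProduct_sub, smul_dotProduct, dotProduct_smul,
          smul_eq_mul, huu, hvv, huv, ← hc]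
        ring
      have hww : w ⬝ᵥ w = 1 := by
        have h1 : (s' • w) ⬝ᵥ (s' • w) = 1 - c ^ 2 := by rw [hsw]; exact hvcvc
        rw [smul_dotProduct, dotProduct_smul, smul_eq_mul, smul_eq_mul] at h1
        have h2 : s' ^ 2 * (w ⬝ᵥ w) = s' ^ 2 * 1 := by
          rw [mul_one]; linear_combination h1 - hs'sq
        exact mul_left_cancel₀ (pow_ne_zero 2 hs'ne) h2
      have hw0 : ∀ i ∉ F, w i = 0 := by
        intro i hi
        rw [hw]
        simp only [Pi.smul_apply, Pi.sub_apply, smul_eq_mul]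
        rw [hv0 i hi, hu0 i hi]
        ring
      clear_value w
      have qexp : ∀ α β : ℝ, (α • u + β • w) ⬝ᵥ (A *ᵥ (α • u + β • w)) =
          α^2 * (u ⬝ᵥ (A *ᵥ u)) + 2*α*β * (u ⬝ᵥ (A *ᵥ w)) + β^2 * (w ⬝ᵥ (A *ᵥ w)) := by
        intro α β
        have hba : w ⬝ᵥ (A *ᵥ u) = u ⬝ᵥ (A *ᵥ w) := by
          rw [herm_dot_swap hAherm w u, dotProduct_comm]
        simp only [mulVec_add, mulVec_smul, add_dotProduct, dotProduct_add, smul_dotProduct,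
          dotProduct_smul, smul_eq_mul, hba]
        ring
      have hquad : ∀ α β : ℝ, α^2 + β^2 = 1 →
          α^2 * (u ⬝ᵥ (A *ᵥ u)) + 2*α*β * (u ⬝ᵥ (A *ᵥ w)) + β^2 * (w ⬝ᵥ (A *ᵥ w))
            ≤ v ⬝ᵥ (A *ᵥ v) := by
        intro α β hab
        have hsupp : supp (α • u + β • w) ⊆ F := by
          intro i hi
          simp only [supp, Finset.mem_filter] at hi
          by_contra hiF
          apply hi.2
          simp only [Pi.add_apply, Pi.smul_apply, smul_eq_mul, hu0 i hiF, hw0 i hiF]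
          ring
        have hnorm : nrm2 (α • u + β • w) = 1 := by
          show Real.sqrt _ = 1
          rw [Real.sqrt_eq_one, sum_sq_eq_dot]
          have hh : (α • u + β • w) ⬝ᵥ (α • u + β • w)
              = α^2*(u ⬝ᵥ u) + 2*α*β*(u ⬝ᵥ w) + β^2*(w ⬝ᵥ w) := by
            simp only [add_dotProduct, dotProduct_add, smul_dotProduct, dotProduct_smul,
              smul_eq_mul, dotProduct_comm w u]
            ring
          rw [hh, huu, huw, hww]
          linear_combination hab
        have hmax := hxFmax (α • u + β • w) hsupp hnorm
        have h2 : (α • u + β • w) ⬝ᵥ (A *ᵥ (α • u + β • w)) ≤ v ⬝ᵥ (A *ᵥ v) := hmax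
        rw [qexp α β] at h2
        exact h2
      have hAbarU : u ⬝ᵥ (Abar *ᵥ u) = lam := by
        rw [show Abar *ᵥ u = lam • u from hxbar_eig, dotProduct_smul, smul_eq_mul, huu]
        ring
      have hEuu := Ebound u u hu0 hu0
      rw [hu2, Real.sqrt_one, mul_one, mul_one] at hEuu
      have haa : lam - ρ ≤ u ⬝ᵥ (A *ᵥ u) := by
        have hsplit : u ⬝ᵥ (A *ᵥ u) = u ⬝ᵥ (Abar *ᵥ u) + u ⬝ᵥ (E *ᵥ u) := by
          rw [hA, add_mulVec, dotProduct_add]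
        rw [hsplit, hAbarU]
        linarith [(abs_le.1 hEuu).1]
      have hw2sum : ∑ i, w i ^ 2 = 1 := by rw [sum_sq_eq_dot, hww]
      have hEww := Ebound w w hw0 hw0
      rw [hw2sum, Real.sqrt_one, mul_one, mul_one] at hEww
      have hgap := gap_bound hAbar hi0 hlam_pos hdlam_pos hgap_le hxbar_eig huu w huw
      rw [hww, mul_one] at hgap
      have hdd : w ⬝ᵥ (A *ᵥ w) ≤ lam - dlam + ρ := by
        have hsplit : w ⬝ᵥ (A *ᵥ w) = w ⬝ᵥ (Abar *ᵥ w) + w ⬝ᵥ (E *ᵥ w) := by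
          rw [hA, add_mulVec, dotProduct_add]
        rw [hsplit]
        linarith [(abs_le.1 hEww).2]
      have hEuw := Ebound u w hu0 hw0
      rw [hu2, hw2sum, Real.sqrt_one, mul_one, mul_one] at hEuw
      have hbb : |u ⬝ᵥ (A *ᵥ w)| ≤ ρ := by
        have hsplit : u ⬝ᵥ (A *ᵥ w) = u ⬝ᵥ (Abar *ᵥ w) + u ⬝ᵥ (E *ᵥ w) := by
          rw [hA, add_mulVec, dotProduct_add]
        have hz : u ⬝ᵥ (Abar *ᵥ w) = 0 := by
          rw [herm_dot_swap hAbar u w, show Abar *ᵥ u = lam • u from hxbar_eig,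
            smul_dotProduct, smul_eq_mul, huw]
          ring
        rw [hsplit, hz, zero_add]
        exact hEuw
      have hμexp : v ⬝ᵥ (A *ᵥ v) =
          c^2 * (u ⬝ᵥ (A *ᵥ u)) + 2*c*s' * (u ⬝ᵥ (A *ᵥ w)) + s'^2 * (w ⬝ᵥ (A *ᵥ w)) := by
        conv_lhs => rw [hvw]
        exact qexp c s'
      set a := u ⬝ᵥ (A *ᵥ u) with ha
      set bb := u ⬝ᵥ (A *ᵥ w) with hbdef
      set d := w ⬝ᵥ (A *ᵥ w) with hd
      set μ := v ⬝ᵥ (A *ᵥ v) with hμ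
      clear_value a bb d μ
      have hquad2 : ∀ α β : ℝ, 0 < α^2 + β^2 →
          α^2 * a + 2*α*β * bb + β^2 * d ≤ μ * (α^2 + β^2) := by
        intro α β hpos
        set n := Real.sqrt (α^2 + β^2) with hn
        have hnpos : 0 < n := Real.sqrt_pos.2 hpos
        have hn2 : n^2 = α^2 + β^2 := Real.sq_sqrt (le_of_lt hpos)
        clear_value n
        have hnne : n ≠ 0 := ne_of_gt hnpos
        have hab : (α/n)^2 + (β/n)^2 = 1 := by
          rw [div_pow, div_pow, ← add_div, hn2, div_self (ne_of_gt hpos)]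
        have h := hquad (α/n) (β/n) hab
        have hexp : n^2 * ((α/n)^2 * a + 2*(α/n)*(β/n) * bb + (β/n)^2 * d)
            = α^2 * a + 2*α*β*bb + β^2*d := by
          field_simp
        have hmul := mul_le_mul_of_nonneg_left h (le_of_lt (by positivity : (0:ℝ) < n^2))
        rw [hexp] at hmul
        calc α^2*a + 2*α*β*bb + β^2*d ≤ n^2 * μ := hmul
          _ = μ * (α^2+β^2) := by rw [hn2]; ring
      have hstep : ∀ t : ℝ,
          2*t*(bb*(c^2 - s'^2) - (a - d)*c*s')
            + t^2*((a*s'^2 - 2*bb*c*s' + d*c^2) - μ) ≤ 0 := by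
        intro t
        have hid : (c - t*s')^2 + (s' + t*c)^2 = 1 + t^2 := by
          linear_combination (1 + t^2) * hcs1
        have h := hquad2 (c - t*s') (s' + t*c) (by rw [hid]; positivity)
        rw [hid] at h
        rw [hμexp] at h ⊢
        linarith [h]
      have hK : bb*(c^2 - s'^2) - (a - d)*c*s' = 0 := by
        set K := bb*(c^2 - s'^2) - (a - d)*c*s' with hKd
        set L := (a*s'^2 - 2*bb*c*s' + d*c^2) - μ with hLd
        set R := |L| with hR
        clear_value K L
        have hR0 : 0 ≤ R := abs_nonneg _
        have hRge : -R ≤ L := neg_abs_le _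
        have h1 := hstep (K / (1 + R))
        have hposR : (0:ℝ) < 1 + R := by linarith
        have hneR : (1 + R) ≠ 0 := ne_of_gt hposR
        have h2 : 2*K^2*(1+R) + K^2*L ≤ 0 := by
          have hmul := mul_le_mul_of_nonneg_left h1
            (le_of_lt (by positivity : (0:ℝ) < (1+R)^2))
          have hexp : (1+R)^2 * (2*(K/(1+R))*K + (K/(1+R))^2 * L)
              = 2*K^2*(1+R) + K^2*L := by
            field_simp
          rw [hexp] at hmul
          linarith [hmul]
        have h3 : K^2 * (-R) ≤ K^2 * L := mul_le_mul_of_nonneg_left hRge (sq_nonneg K)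
        have hKR : 0 ≤ K^2 * R := mul_nonneg (sq_nonneg K) hR0
        have h4 : K^2 ≤ 0 := by linarith [h2, h3, hKR]
        have h5 : K^2 = 0 := le_antisymm h4 (sq_nonneg K)
        exact pow_eq_zero_iff two_ne_zero |>.mp h5
      have hμa : a ≤ μ := by
        have h := hquad2 1 0 (by norm_num)
        norm_num at h
        linarith [h]
      have hμd : dlam - 2*ρ ≤ μ - d := by linarith [haa, hdd, hμa]
      have hsd : s' * (μ - d) = bb * c := by
        linear_combination s' * hμexp + (-c) * hK + (bb*c + d*s') * hcs1
      have hfin1 : s' * (dlam - 2*ρ) ≤ ρ * |c| := by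
        calc s' * (dlam - 2*ρ) ≤ s' * (μ - d) :=
              mul_le_mul_of_nonneg_left hμd (le_of_lt hs'pos)
          _ = bb * c := hsd
          _ ≤ |bb * c| := le_abs_self _
          _ = |bb| * |c| := abs_mul _ _
          _ ≤ ρ * |c| := mul_le_mul_of_nonneg_right hbb (abs_nonneg c)
      have hsq : (1 - c^2) * (dlam - 2*ρ)^2 ≤ ρ^2 * c^2 := by
        have h1 : (s' * (dlam - 2*ρ))^2 ≤ (ρ * |c|)^2 :=
          pow_le_pow_left₀ (mul_nonneg (le_of_lt hs'pos) hg0) hfin1 2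
        calc (1-c^2)*(dlam-2*ρ)^2 = (s'*(dlam-2*ρ))^2 := by rw [mul_pow, hs'sq]
          _ ≤ (ρ*|c|)^2 := h1
          _ = ρ^2 * c^2 := by rw [mul_pow, sq_abs]
      linarith [hsq]
  -- FINISH
  have hfinal : 2 - 2 * |c| ≤ ds ^ 2 := by
    rw [hds2]
    rw [le_div_iff₀ hh2]
    have h1 : c ^ 2 ≤ |c| := by
      rw [← sq_abs, pow_two]
      calc |c| * |c| ≤ 1 * |c| := mul_le_mul_of_nonneg_right hcabs (abs_nonneg c)
        _ = |c| := one_mul _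
    have h2' : (2 - 2*|c|) * (ρ^2 + (dlam - 2*ρ)^2) ≤ (2 - 2*c^2) * (ρ^2 + (dlam - 2*ρ)^2) :=
      mul_le_mul_of_nonneg_right (by linarith) (le_of_lt hh2)
    linarith [h2', key]
  have hsub : ∑ i, (v - u) i ^ 2 = 2 - 2 * c := by
    rw [sum_sq_eq_dot]
    have : (v - u) ⬝ᵥ (v - u) = v ⬝ᵥ v - v ⬝ᵥ u - (u ⬝ᵥ v - u ⬝ᵥ u) := by
      rw [sub_dotProduct, dotProduct_sub, dotProduct_sub]
    rw [this, huu, hvv, huv, ← hc]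
    ring
  have hadd : ∑ i, (v + u) i ^ 2 = 2 + 2 * c := by
    rw [sum_sq_eq_dot]
    have : (v + u) ⬝ᵥ (v + u) = v ⬝ᵥ v + v ⬝ᵥ u + (u ⬝ᵥ v + u ⬝ᵥ u) := by
      rw [add_dotProduct, dotProduct_add, dotProduct_add]
    rw [this, huu, hvv, huv, ← hc]
    ring
  have hend : Real.sqrt (2 - 2 * |c|) ≤ ds := by
    calc Real.sqrt (2 - 2 * |c|) ≤ Real.sqrt (ds ^ 2) := Real.sqrt_le_sqrt hfinal
      _ = ds := Real.sqrt_sq hds0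
  rcases le_or_gt 0 c with hcpos | hcneg
  · have : nrm2 (v - u) = Real.sqrt (2 - 2 * |c|) := by
      rw [show nrm2 (v - u) = Real.sqrt (∑ i, (v - u) i ^ 2) from rfl, hsub,
        abs_of_nonneg hcpos]
    exact le_trans (min_le_left _ _) (this ▸ hend)
  · have : nrm2 (v + u) = Real.sqrt (2 - 2 * |c|) := by
      rw [show nrm2 (v + u) = Real.sqrt (∑ i, (v + u) i ^ 2) from rfl, hadd,
        abs_of_neg hcneg]
      ring_nf
    exact le_trans (min_le_right _ _) (this ▸ hend)

end TPaper
end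

section
/- Let A be a p×p real symmetric matrix whose eigenvalue of largest absolute value is nonzero and simple in absolute value, let y be a unit eigenvector for this eigenvalue, and let γ < 1 be the ratio of the second largest to the largest eigenvalue of A in absolute value. If x is a unit vector with yᵀx > 0 and Ax ≠ 0, then x' = Ax/‖Ax‖ satisfies |yᵀx'| ≥ |yᵀx| / √(1 - (1-γ²)(1-(yᵀx)²)). -/
open scoped RealInnerProductSpace


namespace TPaper

lemma inner_eq_dotp {p : ℕ} (u v : EuclideanSpace ℝ (Fin p)) :
    ⟪u, v⟫ = dotp u v := by
  simp [dotp, PiLp.inner_apply, RCLike.inner_apply, mul_comm]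

lemma dotp_comm {p : ℕ} (u v : Fin p → ℝ) : dotp u v = dotp v u := by
  simp [dotp, mul_comm]

lemma dotp_smul_right {p : ℕ} (u : Fin p → ℝ) (a : ℝ) (v : Fin p → ℝ) :
    dotp u (a • v) = a * dotp u v := by
  simp only [dotp, Finset.mul_sum, Pi.smul_apply, smul_eq_mul]
  exact Finset.sum_congr rfl fun i _ => by ring

lemma dotp_mulVec_symm {p : ℕ} {A : Matrix (Fin p) (Fin p) ℝ} (hA : A.IsHermitian)
    (u v : Fin p → ℝ) : dotp (A.mulVec u) v = dotp u (A.mulVec v) := by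
  simp only [dotp, Matrix.mulVec, dotProduct, Finset.sum_mul, Finset.mul_sum]
  rw [Finset.sum_comm]
  refine Finset.sum_congr rfl fun j _ => Finset.sum_congr rfl fun i _ => ?_
  have h : A i j = A j i := by
    have := congrFun (congrFun hA j) i
    simpa [Matrix.conjTranspose_apply] using this
  rw [h]; ring

lemma parseval_s5 {p : ℕ} (b : OrthonormalBasis (Fin p) ℝ (EuclideanSpace ℝ (Fin p)))
    (u v : Fin p → ℝ) :
    dotp u v = ∑ i, dotp (b i) u * dotp (b i) v := by
  have key := b.sum_inner_mul_inner (WithLp.toLp 2 u) (WithLp.toLp 2 v)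
  simp only [inner_eq_dotp, WithLp.ofLp_toLp] at key
  rw [← key]
  refine Finset.sum_congr rfl fun i _ => ?_
  rw [dotp_comm u (b i)]

lemma nrm2_sq {p : ℕ} (u : Fin p → ℝ) : nrm2 u ^ 2 = dotp u u := by
  rw [nrm2, Real.sq_sqrt (by positivity)]
  exact Finset.sum_congr rfl fun i _ => (pow_two (u i))

lemma nrm2_pos {p : ℕ} {u : Fin p → ℝ} (hu : u ≠ 0) : 0 < nrm2 u := by
  apply Real.sqrt_pos.mpr
  obtain ⟨i, hi⟩ : ∃ i, u i ≠ 0 := by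
    by_contra h; push_neg at h; exact hu (funext h)
  have h2 : 0 < u i ^ 2 := by positivity
  exact lt_of_lt_of_le h2
    (Finset.single_le_sum (fun j _ => sq_nonneg (u j)) (Finset.mem_univ i))

lemma inner_eigen {p : ℕ} {A : Matrix (Fin p) (Fin p) ℝ} (hA : A.IsHermitian)
    (i : Fin p) (w : Fin p → ℝ) :
    dotp (hA.eigenvectorBasis i) (A.mulVec w)
      = hA.eigenvalues i * dotp (hA.eigenvectorBasis i) w := by
  have hev : (A.mulVec (hA.eigenvectorBasis i) : Fin p → ℝ)
      = hA.eigenvalues i • (hA.eigenvectorBasis i : Fin p → ℝ) :=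
    hA.mulVec_eigenvectorBasis i
  rw [← dotp_mulVec_symm hA, hev, dotp_comm, dotp_smul_right, dotp_comm]

theorem statement5 (p : ℕ)
    (A : Matrix (Fin p) (Fin p) ℝ) (hA : A.IsHermitian)
    (lam : ℝ) (i0 : Fin p)
    (hi0 : hA.eigenvalues i0 = lam) (hlam : lam ≠ 0)
    (gamma : ℝ) (hglt : gamma < 1)
    (hga : ∀ j, j ≠ i0 → |hA.eigenvalues j| ≤ gamma * |lam|)
    (hgeq : ∃ j, j ≠ i0 ∧ |hA.eigenvalues j| = gamma * |lam|)
    (y : Fin p → ℝ) (hy : A.mulVec y = lam • y) (hyn : nrm2 y = 1)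
    (x : Fin p → ℝ) (hxn : nrm2 x = 1)
    (hyx : 0 < dotp y x) (hAx : A.mulVec x ≠ 0) :
    |dotp y x| / Real.sqrt (1 - (1 - gamma ^ 2) * (1 - (dotp y x) ^ 2)) ≤
      |dotp y ((nrm2 (A.mulVec x))⁻¹ • A.mulVec x)| := by
  classical
  have habs : 0 < |lam| := abs_pos.mpr hlam
  have hg0 : 0 ≤ gamma := by
    obtain ⟨j, hj, hje⟩ := hgeq
    have h1 : 0 ≤ gamma * |lam| := hje ▸ abs_nonneg _
    nlinarith
  -- orthogonality of y to other eigenvectors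
  have hd0 : ∀ i, i ≠ i0 → dotp (hA.eigenvectorBasis i) y = 0 := by
    intro i hi
    have h1 : dotp (hA.eigenvectorBasis i) (A.mulVec y)
        = hA.eigenvalues i * dotp (hA.eigenvectorBasis i) y := inner_eigen hA i y
    have h2 : dotp (hA.eigenvectorBasis i) (A.mulVec y)
        = lam * dotp (hA.eigenvectorBasis i) y := by
      rw [hy, dotp_smul_right]
    have hne : hA.eigenvalues i ≠ lam := by
      intro h
      have := hga i hi
      rw [h] at this
      nlinarith
    have h3 : (hA.eigenvalues i - lam) * dotp (hA.eigenvectorBasis i) y = 0 := by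
      rw [sub_mul]; rw [h1] at h2; linarith
    rcases mul_eq_zero.mp h3 with h | h
    · exact absurd (by linarith : hA.eigenvalues i = lam) hne
    · exact h
  have hy1 : ∑ i, (dotp (hA.eigenvectorBasis i) y) ^ 2 = 1 := by
    have hp := parseval_s5 hA.eigenvectorBasis y y
    rw [← nrm2_sq y, hyn, one_pow] at hp
    simpa [pow_two] using hp.symm
  have hx1 : ∑ i, (dotp (hA.eigenvectorBasis i) x) ^ 2 = 1 := by
    have hp := parseval_s5 hA.eigenvectorBasis x x
    rw [← nrm2_sq x, hxn, one_pow] at hp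
    simpa [pow_two] using hp.symm
  have hdi0 : (dotp (hA.eigenvectorBasis i0) y) ^ 2 = 1 := by
    have h : ∑ i, (dotp (hA.eigenvectorBasis i) y) ^ 2
        = (dotp (hA.eigenvectorBasis i0) y) ^ 2 :=
      Finset.sum_eq_single_of_mem i0 (Finset.mem_univ i0)
        (fun j _ hj => by rw [hd0 j hj]; ring)
    rw [← h, hy1]
  have ht : dotp y x = dotp (hA.eigenvectorBasis i0) y * dotp (hA.eigenvectorBasis i0) x := by
    rw [parseval_s5 hA.eigenvectorBasis y x]
    exact Finset.sum_eq_single_of_mem i0 (Finset.mem_univ i0)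
      (fun j _ hj => by rw [hd0 j hj]; ring)
  have hti0 : (dotp y x) ^ 2 = (dotp (hA.eigenvectorBasis i0) x) ^ 2 := by
    rw [ht, mul_pow, hdi0, one_mul]
  have ht1 : (dotp y x) ^ 2 ≤ 1 := by
    rw [hti0, ← hx1]
    exact Finset.single_le_sum (f := fun i => (dotp (hA.eigenvectorBasis i) x) ^ 2)
      (fun i _ => sq_nonneg _) (Finset.mem_univ i0)
  have hyAx : dotp y (A.mulVec x) = lam * dotp y x := by
    rw [parseval_s5 hA.eigenvectorBasis y (A.mulVec x)]
    calc ∑ i, dotp (hA.eigenvectorBasis i) y * dotp (hA.eigenvectorBasis i) (A.mulVec x)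
        = ∑ i, dotp (hA.eigenvectorBasis i) y
            * (hA.eigenvalues i * dotp (hA.eigenvectorBasis i) x) :=
          Finset.sum_congr rfl fun i _ => by rw [inner_eigen hA i x]
      _ = dotp (hA.eigenvectorBasis i0) y
            * (hA.eigenvalues i0 * dotp (hA.eigenvectorBasis i0) x) :=
          Finset.sum_eq_single_of_mem i0 (Finset.mem_univ i0)
            (fun j _ hj => by rw [hd0 j hj]; ring)
      _ = lam * dotp y x := by rw [hi0, ht]; ring
  have hs2 : nrm2 (A.mulVec x) ^ 2
      = ∑ i, (hA.eigenvalues i * dotp (hA.eigenvectorBasis i) x) ^ 2 := by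
    rw [nrm2_sq, parseval_s5 hA.eigenvectorBasis (A.mulVec x) (A.mulVec x)]
    exact Finset.sum_congr rfl fun i _ => by
      rw [inner_eigen hA i x, pow_two]
  have hspos : 0 < nrm2 (A.mulVec x) := nrm2_pos hAx
  have hs2b : nrm2 (A.mulVec x) ^ 2
      ≤ lam ^ 2 * ((dotp y x) ^ 2 + gamma ^ 2 * (1 - (dotp y x) ^ 2)) := by
    rw [hs2]
    have hsplit : ∑ i, (hA.eigenvalues i * dotp (hA.eigenvectorBasis i) x) ^ 2
        = (hA.eigenvalues i0 * dotp (hA.eigenvectorBasis i0) x) ^ 2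
          + ∑ i ∈ Finset.univ.erase i0,
              (hA.eigenvalues i * dotp (hA.eigenvectorBasis i) x) ^ 2 := by
      rw [add_comm, Finset.sum_erase_add _ _ (Finset.mem_univ i0)]
    have hcsplit : ∑ i ∈ Finset.univ.erase i0, (dotp (hA.eigenvectorBasis i) x) ^ 2
        = 1 - (dotp (hA.eigenvectorBasis i0) x) ^ 2 := by
      have h := Finset.sum_erase_add Finset.univ
        (fun i => (dotp (hA.eigenvectorBasis i) x) ^ 2) (Finset.mem_univ i0)
      simp only at h
      rw [hx1] at h
      linarith
    have hterm : ∀ i ∈ Finset.univ.erase i0,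
        (hA.eigenvalues i * dotp (hA.eigenvectorBasis i) x) ^ 2
          ≤ gamma ^ 2 * lam ^ 2 * (dotp (hA.eigenvectorBasis i) x) ^ 2 := by
      intro i hi
      have h1 : |hA.eigenvalues i| ≤ gamma * |lam| := hga i (Finset.ne_of_mem_erase hi)
      have h2 : hA.eigenvalues i ^ 2 ≤ gamma ^ 2 * lam ^ 2 := by
        nlinarith [mul_self_le_mul_self (abs_nonneg (hA.eigenvalues i)) h1,
          sq_abs (hA.eigenvalues i), sq_abs lam, abs_nonneg (hA.eigenvalues i)]
      nlinarith [sq_nonneg (dotp (hA.eigenvectorBasis i) x)]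
    have hsum : ∑ i ∈ Finset.univ.erase i0,
        (hA.eigenvalues i * dotp (hA.eigenvectorBasis i) x) ^ 2
          ≤ gamma ^ 2 * lam ^ 2 * (1 - (dotp (hA.eigenvectorBasis i0) x) ^ 2) := by
      calc ∑ i ∈ Finset.univ.erase i0,
            (hA.eigenvalues i * dotp (hA.eigenvectorBasis i) x) ^ 2
          ≤ ∑ i ∈ Finset.univ.erase i0,
              gamma ^ 2 * lam ^ 2 * (dotp (hA.eigenvectorBasis i) x) ^ 2 :=
            Finset.sum_le_sum hterm
        _ = gamma ^ 2 * lam ^ 2 * (1 - (dotp (hA.eigenvectorBasis i0) x) ^ 2) := by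
            rw [← Finset.mul_sum, hcsplit]
    rw [hsplit, hi0, hti0]
    nlinarith [hsum]
  set t := dotp y x with htdef
  set s := nrm2 (A.mulVec x) with hsdef
  have hEeq : 1 - (1 - gamma ^ 2) * (1 - t ^ 2) = t ^ 2 + gamma ^ 2 * (1 - t ^ 2) := by ring
  have hEpos : 0 < t ^ 2 + gamma ^ 2 * (1 - t ^ 2) := by
    have h1 : 0 ≤ gamma ^ 2 * (1 - t ^ 2) := mul_nonneg (sq_nonneg _) (by linarith [ht1])
    have h2 : 0 < t ^ 2 := pow_pos hyx 2
    linarith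
  have hD : 0 < Real.sqrt (t ^ 2 + gamma ^ 2 * (1 - t ^ 2)) := Real.sqrt_pos.mpr hEpos
  set D := Real.sqrt (t ^ 2 + gamma ^ 2 * (1 - t ^ 2)) with hDdef
  have hsle : s ≤ |lam| * D := by
    calc s = Real.sqrt (s ^ 2) := (Real.sqrt_sq hspos.le).symm
      _ ≤ Real.sqrt (lam ^ 2 * (t ^ 2 + gamma ^ 2 * (1 - t ^ 2))) := Real.sqrt_le_sqrt hs2b
      _ = |lam| * D := by rw [Real.sqrt_mul (sq_nonneg _), Real.sqrt_sq_eq_abs]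
  have hrhs : dotp y (s⁻¹ • A.mulVec x) = s⁻¹ * (lam * t) := by
    rw [dotp_smul_right, hyAx]
  rw [hrhs, hEeq]
  have habs2 : |s⁻¹ * (lam * t)| = (|lam| * t) / s := by
    rw [abs_mul, abs_mul, abs_inv, abs_of_pos hspos, abs_of_pos hyx]
    ring
  rw [habs2, abs_of_pos hyx]
  rw [div_le_div_iff₀ hD hspos]
  calc t * s ≤ t * (|lam| * D) := mul_le_mul_of_nonneg_left hsle hyx.le
    _ = |lam| * t * D := by ring

end TPaper
end

section
/- Let x̄ be a unit vector in ℝ^p whose support F̄ has cardinality k̄, let y be a unit vector in ℝ^p, let k be an integer with k̄ < k ≤ p, and let F be a top-k index set for y. Then |Truncate(y,F)ᵀ x̄| ≥ |yᵀx̄| - √(k̄/k) · min[1, (1 + √(k̄/k)) · (1 - (yᵀx̄)²)]. -/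
namespace TPaper

lemma aux_ineq (t U V W Al B a : ℝ) (ht : 0 ≤ t)
    (hU : 0 ≤ U) (hV : 0 ≤ V) (hW : 0 ≤ W) (hAl : 0 ≤ Al) (hB : 0 ≤ B)
    (hUtW : U ≤ t * W) (hUVW : U + V + W ≤ 1) (hAlB : Al + B ≤ 1)
    (ha : |a| ≤ Real.sqrt (V * Al) + Real.sqrt (U * B)) :
    Real.sqrt (U * B) ≤ Real.sqrt t * min 1 ((1 + Real.sqrt t) * (1 - a ^ 2)) := by
  set s := Real.sqrt t with hs_def
  have hs0 : 0 ≤ s := Real.sqrt_nonneg t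
  have hs2 : s ^ 2 = t := Real.sq_sqrt ht
  have hW1 : W ≤ 1 := by linarith
  have hB1 : B ≤ 1 := by linarith
  have part1 : Real.sqrt (U * B) ≤ s := by
    have h0 : U * B ≤ U := mul_le_of_le_one_right hU hB1
    have h0' : t * W ≤ t := mul_le_of_le_one_right ht hW1
    have h1 : U * B ≤ t := by linarith
    calc Real.sqrt (U * B) ≤ Real.sqrt t := Real.sqrt_le_sqrt h1
      _ = s := rfl
  have hq0 : (0:ℝ) < Real.sqrt (1 + t) := Real.sqrt_pos.2 (by linarith)
  set q := Real.sqrt (1 + t) with hq_def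
  have hq2 : q ^ 2 = 1 + t := Real.sq_sqrt (by linarith)
  have hqs : q ≤ 1 + s := by
    have h1 : (1:ℝ) + t ≤ (1 + s) ^ 2 := by nlinarith [hs2, hs0]
    calc q ≤ Real.sqrt ((1 + s) ^ 2) := Real.sqrt_le_sqrt h1
      _ = |1 + s| := Real.sqrt_sq_eq_abs _
      _ = 1 + s := abs_of_nonneg (by linarith)
  set κ := s / q with hκ_def
  have hκ0 : 0 ≤ κ := div_nonneg hs0 hq0.le
  have hκq : κ * q = s := div_mul_cancel₀ s hq0.ne'
  have hsq' : s ≤ q := by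
    have := Real.sqrt_le_sqrt (show t ≤ 1 + t by linarith)
    simpa using this
  have hκ1 : κ ≤ 1 := by rw [div_le_one hq0]; exact hsq'
  have hκ2 : κ ^ 2 * q ^ 2 = t := by rw [← mul_pow, hκq]; exact hs2
  set R := Real.sqrt (U + W) with hR_def
  set Bs := Real.sqrt B with hBs_def
  have hR0 : 0 ≤ R := Real.sqrt_nonneg _
  have hBs0 : 0 ≤ Bs := Real.sqrt_nonneg _
  have hR2 : R ^ 2 = U + W := Real.sq_sqrt (by linarith)
  have hBs2 : Bs ^ 2 = B := Real.sq_sqrt hB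
  have hR1 : R ≤ 1 := Real.sqrt_le_one.2 (by linarith)
  have hBs1 : Bs ≤ 1 := Real.sqrt_le_one.2 (by linarith)
  set σ := R * Bs with hσ_def
  have hσ0 : 0 ≤ σ := mul_nonneg hR0 hBs0
  have hσ1 : σ ≤ 1 := mul_le_one₀ hR1 hBs0 hBs1
  have hσ2 : σ ^ 2 = (U + W) * B := by rw [hσ_def, mul_pow, hR2, hBs2]
  have hUq : U * (1 + t) ≤ t * (U + W) := by linarith [hUtW]
  have f1 : Real.sqrt (U * B) ≤ κ * σ := by
    have hκσ0 : 0 ≤ κ * σ := mul_nonneg hκ0 hσ0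
    have h2 : U * B * (1 + t) ≤ t * ((U + W) * B) := by
      have h := mul_le_mul_of_nonneg_right hUq hB
      calc U * B * (1 + t) = U * (1 + t) * B := by ring
        _ ≤ t * (U + W) * B := h
        _ = t * ((U + W) * B) := by ring
    have hee : (κ * σ) ^ 2 * (1 + t) = t * ((U + W) * B) := by
      rw [← hσ2, ← hq2]
      calc (κ * σ) ^ 2 * q ^ 2 = κ ^ 2 * q ^ 2 * σ ^ 2 := by ring
        _ = t * σ ^ 2 := by rw [hκ2]
    have hsq : U * B ≤ (κ * σ) ^ 2 := by
      have h3 : U * B * (1 + t) ≤ (κ * σ) ^ 2 * (1 + t) := by rw [hee]; exact h2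
      exact le_of_mul_le_mul_right h3 (by linarith)
    calc Real.sqrt (U * B) ≤ Real.sqrt ((κ * σ) ^ 2) := Real.sqrt_le_sqrt hsq
      _ = |κ * σ| := Real.sqrt_sq_eq_abs _
      _ = κ * σ := abs_of_nonneg hκσ0
  have f2 : Real.sqrt (V * Al) ≤ 1 - σ := by
    have hv : V ≤ 1 - (U + W) := by linarith
    have hal : Al ≤ 1 - B := by linarith
    have h0 : V * Al ≤ (1 - (U + W)) * (1 - B) := mul_le_mul hv hal hAl (by linarith)
    have h1 : (1 - (U + W)) * (1 - B) ≤ (1 - σ) ^ 2 := by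
      rw [← hR2, ← hBs2, hσ_def]; linarith [sq_nonneg (R - Bs)]
    calc Real.sqrt (V * Al) ≤ Real.sqrt ((1 - σ) ^ 2) := Real.sqrt_le_sqrt (by linarith)
      _ = |1 - σ| := Real.sqrt_sq_eq_abs _
      _ = 1 - σ := abs_of_nonneg (by linarith)
  have ha2 : |a| ≤ 1 - σ * (1 - κ) := by
    have h : |a| ≤ (1 - σ) + κ * σ := le_trans ha (by linarith [f1, f2])
    linarith [h]
  have hσκ : 0 ≤ σ * (1 - κ) := mul_nonneg hσ0 (by linarith)
  have ha3 : a ^ 2 ≤ (1 - σ * (1 - κ)) ^ 2 := by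
    have h := pow_le_pow_left₀ (abs_nonneg a) ha2 2
    rwa [sq_abs] at h
  have hE : σ * (1 - κ) * (2 - σ * (1 - κ)) ≤ 1 - a ^ 2 := by
    have hid : (1 - σ * (1 - κ)) ^ 2 = 1 - σ * (1 - κ) * (2 - σ * (1 - κ)) := by ring
    rw [hid] at ha3; linarith
  have h2' : (1 - κ ^ 2) * q ^ 2 = 1 := by
    have h : κ ^ 2 * q ^ 2 = t := hκ2
    linear_combination hq2 - h
  have hkey : κ ≤ s * (1 + s) * (1 - κ ^ 2) := by
    have h1 : κ * q ^ 2 = s * q := by rw [pow_two, ← mul_assoc, hκq]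
    have h3 : s * q ≤ s * (1 + s) := mul_le_mul_of_nonneg_left hqs hs0
    have h4 : κ * q ^ 2 ≤ (s * (1 + s) * (1 - κ ^ 2)) * q ^ 2 := by
      calc κ * q ^ 2 = s * q := h1
        _ ≤ s * (1 + s) := h3
        _ = s * (1 + s) * ((1 - κ ^ 2) * q ^ 2) := by rw [h2']; ring
        _ = (s * (1 + s) * (1 - κ ^ 2)) * q ^ 2 := by ring
    exact le_of_mul_le_mul_right h4 (by positivity)
  have part2 : Real.sqrt (U * B) ≤ s * ((1 + s) * (1 - a ^ 2)) := by
    have e0 : (0:ℝ) ≤ 1 - κ := by linarith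
    have e1 : 1 + κ ≤ 2 - σ * (1 - κ) := by
      have h := mul_nonneg (by linarith : (0:ℝ) ≤ 1 - σ) e0
      linarith [h]
    have nn : 0 ≤ s * (1 + s) * (σ * (1 - κ)) := by positivity
    have step1 : κ * σ ≤ s * (1 + s) * (1 - κ ^ 2) * σ := by
      have h := mul_le_mul_of_nonneg_right hkey hσ0
      linarith [h]
    have step2 : s * (1 + s) * (1 - κ ^ 2) * σ ≤
        s * (1 + s) * (σ * (1 - κ) * (2 - σ * (1 - κ))) := by
      calc s * (1 + s) * (1 - κ ^ 2) * σ
          = (s * (1 + s) * (σ * (1 - κ))) * (1 + κ) := by ring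
        _ ≤ (s * (1 + s) * (σ * (1 - κ))) * (2 - σ * (1 - κ)) :=
            mul_le_mul_of_nonneg_left e1 nn
        _ = s * (1 + s) * (σ * (1 - κ) * (2 - σ * (1 - κ))) := by ring
    have step3 : s * (1 + s) * (σ * (1 - κ) * (2 - σ * (1 - κ))) ≤
        s * (1 + s) * (1 - a ^ 2) :=
      mul_le_mul_of_nonneg_left hE (by positivity)
    calc Real.sqrt (U * B) ≤ κ * σ := f1
      _ ≤ s * (1 + s) * (1 - a ^ 2) := by linarith
      _ = s * ((1 + s) * (1 - a ^ 2)) := by ring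
  rcases le_total (1:ℝ) ((1 + s) * (1 - a ^ 2)) with h | h
  · rw [min_eq_left h]; simpa using part1
  · rw [min_eq_right h]; exact part2

lemma comb_ineq (U W m kR kbR jR cR dR : ℝ) (hU : U ≤ jR * m) (hW : dR * m ≤ W)
    (hm : 0 ≤ m) (hc : 0 ≤ cR) (hj : 0 ≤ jR) (hd : 0 ≤ dR)
    (hk : dR + cR = kR) (hkb : jR + cR = kbR) (hjd : jR ≤ dR) : kR * U ≤ kbR * W := by
  subst hk; subst hkb
  have h1 : (dR + cR) * U ≤ (dR + cR) * (jR * m) :=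
    mul_le_mul_of_nonneg_left hU (by linarith)
  have h2 : (jR + cR) * (dR * m) ≤ (jR + cR) * W :=
    mul_le_mul_of_nonneg_left hW (by linarith)
  have h3 : 0 ≤ cR * ((dR - jR) * m) :=
    mul_nonneg hc (mul_nonneg (by linarith) hm)
  nlinarith [h1, h2, h3]

theorem statement8 (p kbar k : ℕ) (hk : kbar < k) (hkp : k ≤ p)
    (xbar y : Fin p → ℝ)
    (hxbar_norm : nrm2 xbar = 1) (hxbar_supp : (supp xbar).card = kbar)
    (hy_norm : nrm2 y = 1)
    (F : Finset (Fin p)) (hF : IsTopK y k F) :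
    |dotp y xbar| - Real.sqrt ((kbar : ℝ) / k) *
        min 1 ((1 + Real.sqrt ((kbar : ℝ) / k)) * (1 - (dotp y xbar) ^ 2)) ≤
      |dotp (Trunc y F) xbar| := by
  classical
  obtain ⟨hFcard, hFtop⟩ := hF
  set Fb := supp xbar with hFb_def
  have hxz : ∀ i, i ∉ Fb → xbar i = 0 := by
    intro i hi
    by_contra h
    exact hi (by simp [hFb_def, supp, h])
  have hy2 : ∑ i, y i ^ 2 = 1 := by
    unfold nrm2 at hy_norm
    exact Real.sqrt_eq_one.mp hy_norm
  have hx2 : ∑ i, xbar i ^ 2 = 1 := by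
    unfold nrm2 at hxbar_norm
    exact Real.sqrt_eq_one.mp hxbar_norm
  set a := dotp y xbar with ha_def
  set S1 := ∑ i ∈ F ∩ Fb, y i * xbar i with hS1_def
  set e := ∑ i ∈ Fb \ F, y i * xbar i with he_def
  have hsum_Fb : ∀ f : Fin p → ℝ, ∑ i ∈ Fb, f i = ∑ i ∈ Fb \ F, f i + ∑ i ∈ Fb ∩ F, f i := by
    intro f
    rw [← Finset.sum_union (Finset.disjoint_sdiff_inter Fb F), Finset.sdiff_union_inter]
  have hsplit : a = S1 + e := by
    have h1 : a = ∑ i ∈ Fb, y i * xbar i := by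
      rw [ha_def]
      unfold dotp
      symm
      apply Finset.sum_subset (Finset.subset_univ _)
      intro i _ hi
      rw [hxz i hi, mul_zero]
    rw [h1, hsum_Fb (fun i => y i * xbar i), hS1_def, he_def, Finset.inter_comm]
    ring
  have htrunc : dotp (Trunc y F) xbar = S1 := by
    unfold dotp Trunc
    have h1 : ∑ i, (if i ∈ F then y i else 0) * xbar i = ∑ i ∈ F, y i * xbar i := by
      rw [Finset.sum_congr rfl (fun i _ => by rw [ite_mul, zero_mul]),
        ← Finset.sum_filter]
      congr 1
      simp
    rw [h1, hS1_def]
    symm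
    apply Finset.sum_subset Finset.inter_subset_left
    intro i hiF hin
    rw [hxz i (fun h => hin (Finset.mem_inter.2 ⟨hiF, h⟩)), mul_zero]
  set U := ∑ i ∈ Fb \ F, y i ^ 2 with hU_def
  set B := ∑ i ∈ Fb \ F, xbar i ^ 2 with hB_def
  set V := ∑ i ∈ F ∩ Fb, y i ^ 2 with hV_def
  set Al := ∑ i ∈ F ∩ Fb, xbar i ^ 2 with hAl_def
  set W := ∑ i ∈ F \ Fb, y i ^ 2 with hW_def
  have hU0 : 0 ≤ U := Finset.sum_nonneg fun i _ => sq_nonneg _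
  have hB0 : 0 ≤ B := Finset.sum_nonneg fun i _ => sq_nonneg _
  have hV0 : 0 ≤ V := Finset.sum_nonneg fun i _ => sq_nonneg _
  have hAl0 : 0 ≤ Al := Finset.sum_nonneg fun i _ => sq_nonneg _
  have hW0 : 0 ≤ W := Finset.sum_nonneg fun i _ => sq_nonneg _
  have hCS_e : |e| ≤ Real.sqrt (U * B) := by
    have h := Finset.sum_mul_sq_le_sq_mul_sq (Fb \ F) y xbar
    calc |e| = Real.sqrt (e ^ 2) := (Real.sqrt_sq_eq_abs e).symm
      _ ≤ Real.sqrt (U * B) := Real.sqrt_le_sqrt h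
  have hCS_1 : |S1| ≤ Real.sqrt (V * Al) := by
    have h := Finset.sum_mul_sq_le_sq_mul_sq (F ∩ Fb) y xbar
    calc |S1| = Real.sqrt (S1 ^ 2) := (Real.sqrt_sq_eq_abs S1).symm
      _ ≤ Real.sqrt (V * Al) := Real.sqrt_le_sqrt h
  have haabs : |a| ≤ Real.sqrt (V * Al) + Real.sqrt (U * B) := by
    rw [hsplit]
    calc |S1 + e| ≤ |S1| + |e| := abs_add_le _ _
      _ ≤ Real.sqrt (V * Al) + Real.sqrt (U * B) := add_le_add hCS_1 hCS_e
  have hUVW : U + V + W ≤ 1 := by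
    have h1 : ∑ i ∈ Fb, y i ^ 2 = U + ∑ i ∈ Fb ∩ F, y i ^ 2 := hsum_Fb (fun i => y i ^ 2)
    have h2 : V = ∑ i ∈ Fb ∩ F, y i ^ 2 := by rw [hV_def, Finset.inter_comm]
    have hd : Disjoint Fb (F \ Fb) := Finset.disjoint_sdiff
    have h3 : ∑ i ∈ Fb ∪ (F \ Fb), y i ^ 2 = ∑ i ∈ Fb, y i ^ 2 + W :=
      Finset.sum_union hd
    have h4 : ∑ i ∈ Fb ∪ (F \ Fb), y i ^ 2 ≤ ∑ i, y i ^ 2 :=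
      Finset.sum_le_sum_of_subset_of_nonneg (Finset.subset_univ _)
        (fun i _ _ => sq_nonneg _)
    rw [hy2] at h4
    linarith
  have hAlB : Al + B ≤ 1 := by
    have h1 : ∑ i ∈ Fb, xbar i ^ 2 = B + ∑ i ∈ Fb ∩ F, xbar i ^ 2 :=
      hsum_Fb (fun i => xbar i ^ 2)
    have h2 : Al = ∑ i ∈ Fb ∩ F, xbar i ^ 2 := by rw [hAl_def, Finset.inter_comm]
    have h4 : ∑ i ∈ Fb, xbar i ^ 2 ≤ ∑ i, xbar i ^ 2 :=
      Finset.sum_le_sum_of_subset_of_nonneg (Finset.subset_univ _)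
        (fun i _ _ => sq_nonneg _)
    rw [hx2] at h4
    linarith
  -- combinatorial bound
  have hFne : F.Nonempty := Finset.card_pos.mp (by rw [hFcard]; omega)
  obtain ⟨i0, hi0F, hi0min⟩ := Finset.exists_min_image F (fun i => y i ^ 2) hFne
  set m := y i0 ^ 2 with hm_def
  have hm0 : 0 ≤ m := sq_nonneg _
  have hUm : U ≤ ((Fb \ F).card : ℝ) * m := by
    have h := Finset.sum_le_card_nsmul (Fb \ F) (fun i => y i ^ 2) m ?_
    · simpa [nsmul_eq_mul] using h
    · intro i hi
      have hiF : i ∉ F := (Finset.mem_sdiff.mp hi).2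
      have habs := hFtop i0 hi0F i hiF
      calc y i ^ 2 = |y i| ^ 2 := (sq_abs _).symm
        _ ≤ |y i0| ^ 2 := pow_le_pow_left₀ (abs_nonneg _) habs 2
        _ = m := sq_abs _
  have hWm : ((F \ Fb).card : ℝ) * m ≤ W := by
    have h := Finset.card_nsmul_le_sum (F \ Fb) (fun i => y i ^ 2) m
      (fun i hi => hi0min i (Finset.mem_sdiff.mp hi).1)
    simpa [nsmul_eq_mul] using h
  have hc1 : (Fb \ F).card + (Fb ∩ F).card = kbar := by
    rw [Finset.card_sdiff_add_card_inter, hFb_def, hxbar_supp]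
  have hc2 : (F \ Fb).card + (F ∩ Fb).card = k := by
    rw [Finset.card_sdiff_add_card_inter, hFcard]
  have hcc : (F ∩ Fb).card = (Fb ∩ F).card := by rw [Finset.inter_comm]
  have hjd : (Fb \ F).card ≤ (F \ Fb).card := by omega
  have hkR : ((F \ Fb).card : ℝ) + ((Fb ∩ F).card : ℝ) = (k : ℝ) := by
    rw [← hcc]; exact_mod_cast hc2
  have hkbR : ((Fb \ F).card : ℝ) + ((Fb ∩ F).card : ℝ) = (kbar : ℝ) := by
    exact_mod_cast hc1
  have hkUW : (k : ℝ) * U ≤ (kbar : ℝ) * W :=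
    comb_ineq U W m (k : ℝ) (kbar : ℝ) ((Fb \ F).card : ℝ) ((Fb ∩ F).card : ℝ)
      ((F \ Fb).card : ℝ) hUm hWm hm0 (Nat.cast_nonneg _) (Nat.cast_nonneg _)
      (Nat.cast_nonneg _) hkR hkbR (by exact_mod_cast hjd)
  have hk0 : (0 : ℝ) < k := by
    have : 0 < k := by omega
    exact_mod_cast this
  have hUtW : U ≤ ((kbar : ℝ) / k) * W := by
    rw [div_mul_eq_mul_div, le_div_iff₀ hk0]
    linarith [hkUW]
  have ht : (0 : ℝ) ≤ (kbar : ℝ) / k := by positivity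
  have hmain := aux_ineq ((kbar : ℝ) / k) U V W Al B a ht hU0 hV0 hW0 hAl0 hB0
    hUtW hUVW hAlB haabs
  have habs2 : |a| - |S1| ≤ |e| := by
    have h := abs_sub_abs_le_abs_sub a S1
    have : a - S1 = e := by rw [hsplit]; ring
    rwa [this] at h
  rw [htrunc]
  linarith [habs2, hCS_e, hmain]

end TPaper
end

section
/- Let x̄ be a unit vector in ℝ^p whose support F̄ has cardinality k̄, let y be a unit vector in ℝ^p, let k be an integer with k̄ ≤ k ≤ p, and let F be a top-k index set for y. If Δ = yᵀx̄ satisfies Δ ≥ √(k̄/(k̄+k)), then the squared Euclidean norm of the restriction of y to the coordinates in F̄ \ F is at most (k̄/k)·(1 - Δ²), and in particular at most Δ². -/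
namespace TPaper

set_option maxHeartbeats 1000000

theorem statement9 (p kbar k : ℕ) (hk : kbar ≤ k) (hkp : k ≤ p)
    (xbar y : Fin p → ℝ)
    (hxbar_norm : nrm2 xbar = 1) (hxbar_supp : (supp xbar).card = kbar)
    (hy_norm : nrm2 y = 1)
    (F : Finset (Fin p)) (hF : IsTopK y k F)
    (hDelta : Real.sqrt ((kbar : ℝ) / (kbar + k)) ≤ dotp y xbar) :
    (nrm2 (Trunc y (supp xbar \ F))) ^ 2 ≤ ((kbar : ℝ) / k) * (1 - (dotp y xbar) ^ 2) ∧
      (nrm2 (Trunc y (supp xbar \ F))) ^ 2 ≤ (dotp y xbar) ^ 2 := by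
  classical
  set Fb := supp xbar with hFbdef
  set S := Fb \ F with hSdef
  set T := F \ Fb with hTdef
  set Δ := dotp y xbar with hΔdef
  -- squared norms
  have hy2 : ∑ i, y i ^ 2 = 1 := by
    have hnn : 0 ≤ ∑ i, y i ^ 2 := Finset.sum_nonneg fun i _ => sq_nonneg _
    have h : Real.sqrt (∑ i, y i ^ 2) = 1 := hy_norm
    nlinarith [Real.sq_sqrt hnn]
  have hx2 : ∑ i, xbar i ^ 2 = 1 := by
    have hnn : 0 ≤ ∑ i, xbar i ^ 2 := Finset.sum_nonneg fun i _ => sq_nonneg _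
    have h : Real.sqrt (∑ i, xbar i ^ 2) = 1 := hxbar_norm
    nlinarith [Real.sq_sqrt hnn]
  have hx0 : ∀ i, i ∉ Fb → xbar i = 0 := by
    intro i hi
    by_contra h
    exact hi (by simp [hFbdef, supp, h])
  -- kbar > 0
  have hkbar_pos : 0 < kbar := by
    rcases Nat.eq_zero_or_pos kbar with h0 | h
    · exfalso
      have hFbe : Fb = ∅ := Finset.card_eq_zero.mp (hxbar_supp.trans h0)
      have : ∀ i, xbar i = 0 := fun i => hx0 i (by simp [hFbe])
      simp [this] at hx2
    · exact h
  have hkpos : 0 < k := lt_of_lt_of_le hkbar_pos hk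
  have hkR : (0:ℝ) < k := by exact_mod_cast hkpos
  have hkbR : (0:ℝ) ≤ kbar := by positivity
  -- b = squared norm of truncation
  have hb : (nrm2 (Trunc y S)) ^ 2 = ∑ i ∈ S, y i ^ 2 := by
    have hnn : 0 ≤ ∑ i, (Trunc y S) i ^ 2 := Finset.sum_nonneg fun i _ => sq_nonneg _
    have h1 : (nrm2 (Trunc y S)) ^ 2 = ∑ i, (Trunc y S) i ^ 2 := Real.sq_sqrt hnn
    rw [h1]
    rw [show (∑ i, (Trunc y S) i ^ 2) = ∑ i, (if i ∈ S then y i ^ 2 else 0) from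
      Finset.sum_congr rfl fun i _ => by by_cases h : i ∈ S <;> simp [Trunc, h]]
    simp [Finset.sum_ite_mem]
  set b := ∑ i ∈ S, y i ^ 2 with hbdef
  set c := ∑ i ∈ T, y i ^ 2 with hcdef
  have hbnn : 0 ≤ b := Finset.sum_nonneg fun i _ => sq_nonneg _
  have hcnn : 0 ≤ c := Finset.sum_nonneg fun i _ => sq_nonneg _
  clear_value b c Δ
  -- Cauchy–Schwarz : Δ² ≤ ∑_{Fb} y²
  have hΔFb : Δ = ∑ i ∈ Fb, y i * xbar i := by
    rw [hΔdef]
    unfold dotp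
    exact (Finset.sum_subset (Finset.subset_univ Fb)
      (fun i _ hi => by rw [hx0 i hi]; ring)).symm
  have hxFb : ∑ i ∈ Fb, xbar i ^ 2 = 1 := by
    rw [← hx2]
    exact Finset.sum_subset (Finset.subset_univ Fb)
      (fun i _ hi => by rw [hx0 i hi]; ring)
  have hCS : Δ ^ 2 ≤ ∑ i ∈ Fb, y i ^ 2 := by
    have := Finset.sum_mul_sq_le_sq_mul_sq Fb y xbar
    rw [hxFb] at this
    rw [hΔFb]
    linarith
  -- disjointness : ∑_{Fb} y² + c ≤ 1
  have hdisj : Disjoint Fb T := Finset.disjoint_sdiff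
  have hsum_le : (∑ i ∈ Fb, y i ^ 2) + c ≤ 1 := by
    rw [hcdef, ← Finset.sum_union hdisj, ← hy2]
    exact Finset.sum_le_sum_of_subset_of_nonneg (Finset.subset_univ _)
      (fun i _ _ => sq_nonneg _)
  have hc_le : c ≤ 1 - Δ ^ 2 := by linarith
  -- top-k property : b * |T| ≤ |S| * c
  have hbT : b * T.card ≤ (S.card : ℝ) * c := by
    have key : ∀ i ∈ S, ∀ j ∈ T, y i ^ 2 ≤ y j ^ 2 := by
      intro i hi j hj
      have hiF : i ∉ F := (Finset.mem_sdiff.mp hi).2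
      have hjF : j ∈ F := (Finset.mem_sdiff.mp hj).1
      have := hF.2 j hjF i hiF
      calc y i ^ 2 = |y i| ^ 2 := (sq_abs _).symm
        _ ≤ |y j| ^ 2 := pow_le_pow_left₀ (abs_nonneg _) this 2
        _ = y j ^ 2 := sq_abs _
    calc b * T.card = ∑ i ∈ S, ∑ _j ∈ T, y i ^ 2 := by
          rw [hbdef, Finset.sum_mul]
          exact Finset.sum_congr rfl fun i _ => by
            simp [Finset.sum_const, nsmul_eq_mul, mul_comm]
      _ ≤ ∑ i ∈ S, ∑ j ∈ T, y j ^ 2 := by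
          apply Finset.sum_le_sum
          intro i hi
          exact Finset.sum_le_sum fun j hj => key i hi j hj
      _ = (S.card : ℝ) * c := by simp [hcdef, Finset.sum_const, nsmul_eq_mul]
  -- cardinalities
  have hScard : S.card + (Fb ∩ F).card = kbar := by
    rw [hSdef, ← hxbar_supp]
    exact Finset.card_sdiff_add_card_inter Fb F
  have hTcard : T.card + (Fb ∩ F).card = k := by
    rw [hTdef, ← hF.1, Finset.inter_comm]
    exact Finset.card_sdiff_add_card_inter F Fb
  have hST : S.card ≤ T.card := by omega
  -- b ≤ c
  have hbc : b ≤ c := by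
    rcases Nat.eq_zero_or_pos T.card with h0 | h
    · have hS0 : S.card = 0 := by omega
      have : S = ∅ := Finset.card_eq_zero.mp hS0
      rw [hbdef, this]
      simpa using hcnn
    · have hTR : (0:ℝ) < T.card := by exact_mod_cast h
      have hSR : (S.card : ℝ) ≤ T.card := by exact_mod_cast hST
      nlinarith
  -- b * k ≤ kbar * c
  have hbk : b * k ≤ (kbar : ℝ) * c := by
    have h1 : b * (Fb ∩ F).card ≤ ((Fb ∩ F).card : ℝ) * c := by
      have : (0:ℝ) ≤ ((Fb ∩ F).card : ℝ) := by positivity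
      nlinarith
    have hkcast : (k : ℝ) = (T.card : ℝ) + ((Fb ∩ F).card : ℝ) := by
      exact_mod_cast (hTcard.symm : k = T.card + (Fb ∩ F).card)
    have hkbcast : (kbar : ℝ) = (S.card : ℝ) + ((Fb ∩ F).card : ℝ) := by
      exact_mod_cast (hScard.symm : kbar = S.card + (Fb ∩ F).card)
    rw [hkcast, hkbcast]
    nlinarith
  -- first conclusion
  have hmain : b ≤ ((kbar : ℝ) / k) * (1 - Δ ^ 2) := by
    rw [div_mul_eq_mul_div, le_div_iff₀ hkR]
    nlinarith
  -- Δ² ≥ kbar/(kbar+k)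
  have hΔnn : 0 ≤ Δ := le_trans (Real.sqrt_nonneg _) hDelta
  have hfrac : (kbar : ℝ) / (kbar + k) ≤ Δ ^ 2 := by
    have hnn : (0:ℝ) ≤ (kbar : ℝ) / (kbar + k) := by positivity
    nlinarith [Real.sq_sqrt hnn, Real.sqrt_nonneg ((kbar : ℝ) / (kbar + k))]
  have hsecond : ((kbar : ℝ) / k) * (1 - Δ ^ 2) ≤ Δ ^ 2 := by
    have hkk : (0:ℝ) < (kbar : ℝ) + k := by positivity
    have h1 : (kbar : ℝ) ≤ ((kbar : ℝ) + k) * Δ ^ 2 := by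
      rw [div_le_iff₀ hkk] at hfrac
      linarith
    rw [div_mul_eq_mul_div, div_le_iff₀ hkR]
    nlinarith
  rw [hb]
  exact ⟨hmain, le_trans hmain hsecond⟩

end TPaper
end

section
/- Let A be a p×p real symmetric positive semidefinite matrix and 1 ≤ k ≤ p. Then the largest diagonal entry of A satisfies max_i [A]_{ii} ≥ λ_max(A,k)/k, where λ_max(A,k) = sup { xᵀAx : x ∈ ℝ^p, ‖x‖ = 1, ‖x‖₀ ≤ k } is the largest k-sparse eigenvalue of A. -/
namespace TPaper

lemma quad_nonneg {p : ℕ} {A : Matrix (Fin p) (Fin p) ℝ} (hA : A.PosSemidef)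
    (v : Fin p → ℝ) : 0 ≤ ∑ i, v i * ∑ j, A i j * v j := by
  have := hA.re_dotProduct_nonneg v
  simpa [dotProduct, Matrix.mulVec] using this

lemma diag_nonneg' {p : ℕ} {A : Matrix (Fin p) (Fin p) ℝ} (hA : A.PosSemidef)
    (i : Fin p) : 0 ≤ A i i := by
  have h := quad_nonneg hA (Pi.single i 1)
  simpa [Pi.single_apply, ite_mul, mul_ite, Finset.sum_ite_eq, Finset.sum_ite_eq',
    eq_comm] using h

lemma two_mul_le {p : ℕ} {A : Matrix (Fin p) (Fin p) ℝ} (hA : A.PosSemidef)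
    (i j : Fin p) (b : ℝ) :
    0 ≤ A i i + 2 * b * A i j + b ^ 2 * A j j := by
  have hsym : A j i = A i j := by
    have := congrFun (congrFun hA.1 i) j
    simpa [Matrix.conjTranspose_apply] using this
  have h := quad_nonneg hA (Pi.single i 1 + Pi.single j b)
  have hin : ∀ i' : Fin p, ∑ j', A i' j' * (Pi.single i 1 + Pi.single j b : Fin p → ℝ) j'
      = A i' i + A i' j * b := by
    intro i'
    simp [Pi.single_apply, mul_add, mul_ite, Finset.sum_add_distrib,
      Finset.sum_ite_eq', eq_comm]
  simp only [hin] at h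
  have hout : ∑ i', (Pi.single i 1 + Pi.single j b : Fin p → ℝ) i' * (A i' i + A i' j * b)
      = (A i i + A i j * b) + b * (A j i + A j j * b) := by
    simp [Pi.single_apply, ite_mul, add_mul, Finset.sum_add_distrib, Finset.sum_ite_eq,
      Finset.sum_ite_eq']
  simp only [hout, hsym] at h
  nlinarith [h]

lemma abs_entry_le {p : ℕ} {A : Matrix (Fin p) (Fin p) ℝ} (hA : A.PosSemidef)
    {m : ℝ} (hm : ∀ j, A j j ≤ m) (i j : Fin p) : |A i j| ≤ m := by
  have h1 := two_mul_le hA i j 1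
  have h2 := two_mul_le hA i j (-1)
  have hi := hm i; have hj := hm j
  rw [abs_le]; constructor <;> nlinarith

theorem statement13 (p k : ℕ) (hk1 : 1 ≤ k) (hkp : k ≤ p)
    (A : Matrix (Fin p) (Fin p) ℝ) (hA : A.PosSemidef) :
    ∃ i : Fin p,
      sSup {r : ℝ | ∃ x : Fin p → ℝ,
          nrm2 x = 1 ∧ (supp x).card ≤ k ∧ r = dotp x (A.mulVec x)} / k ≤
        A i i := by
  have hp : 0 < p := lt_of_lt_of_le hk1 hkp
  obtain ⟨i, -, hi⟩ := Finset.exists_max_image (Finset.univ : Finset (Fin p))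
    (fun j => A j j) ⟨⟨0, hp⟩, Finset.mem_univ _⟩
  refine ⟨i, ?_⟩
  set m := A i i with hm
  have hmax : ∀ j, A j j ≤ m := fun j => hi j (Finset.mem_univ j)
  have hm0 : 0 ≤ m := diag_nonneg' hA i
  have hk0 : (0 : ℝ) < k := by exact_mod_cast hk1
  rw [div_le_iff₀ hk0]
  refine Real.sSup_le ?_ (by positivity)
  rintro r ⟨x, hx1, hxk, rfl⟩
  -- ∑ x i ^ 2 = 1
  have hsum1 : ∑ j, x j ^ 2 = 1 := by
    have h0 : 0 ≤ ∑ j, x j ^ 2 := Finset.sum_nonneg fun j _ => sq_nonneg _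
    have h := hx1
    rw [nrm2] at h
    nlinarith [Real.sq_sqrt h0, h]
  set s := supp x with hs
  have hxs : ∀ j ∉ s, x j = 0 := by
    intro j hj
    by_contra h
    exact hj (Finset.mem_filter.mpr ⟨Finset.mem_univ _, h⟩)
  -- restrict the quadratic form to s
  have hrestrict : dotp x (A.mulVec x) = ∑ a ∈ s, ∑ b ∈ s, x a * A a b * x b := by
    rw [dotp]
    have : ∀ a : Fin p, x a * (A.mulVec x) a = ∑ b : Fin p, x a * A a b * x b := by
      intro a
      simp [Matrix.mulVec, dotProduct, Finset.mul_sum, mul_assoc]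
    simp only [this]
    rw [← Finset.sum_subset (Finset.subset_univ s)]
    · refine Finset.sum_congr rfl fun a _ => ?_
      rw [← Finset.sum_subset (Finset.subset_univ s)]
      intro b _ hb
      rw [hxs b hb]; ring
    · intro a _ ha
      rw [Finset.sum_eq_zero]
      intro b _
      rw [hxs a ha]; ring
  rw [hrestrict]
  -- termwise bound
  have hterm : ∀ a ∈ s, ∀ b ∈ s, x a * A a b * x b ≤ |x a| * |x b| * m := by
    intro a _ b _
    calc x a * A a b * x b ≤ |x a * A a b * x b| := le_abs_self _
    _ = |x a| * |x b| * |A a b| := by rw [abs_mul, abs_mul]; ring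
    _ ≤ |x a| * |x b| * m :=
        mul_le_mul_of_nonneg_left (abs_entry_le hA hmax a b)
          (mul_nonneg (abs_nonneg _) (abs_nonneg _))
  have hb1 : ∑ a ∈ s, ∑ b ∈ s, x a * A a b * x b ≤ (∑ a ∈ s, |x a|) ^ 2 * m := by
    calc ∑ a ∈ s, ∑ b ∈ s, x a * A a b * x b
        ≤ ∑ a ∈ s, ∑ b ∈ s, |x a| * |x b| * m :=
          Finset.sum_le_sum fun a ha => Finset.sum_le_sum fun b hb => hterm a ha b hb
    _ = (∑ a ∈ s, |x a|) ^ 2 * m := by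
          rw [sq, Finset.sum_mul_sum]
          rw [Finset.sum_mul]
          refine Finset.sum_congr rfl fun a _ => ?_
          rw [Finset.sum_mul]
  have hcs : (∑ a ∈ s, |x a|) ^ 2 ≤ (s.card : ℝ) * ∑ a ∈ s, |x a| ^ 2 := by
    exact_mod_cast sq_sum_le_card_mul_sum_sq (s := s) (f := fun a => |x a|)
  have hsq : ∑ a ∈ s, |x a| ^ 2 ≤ 1 := by
    rw [← hsum1]
    simp only [sq_abs]
    exact Finset.sum_le_sum_of_subset_of_nonneg (Finset.subset_univ s)
      fun j _ _ => sq_nonneg _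
  have hcard : (s.card : ℝ) ≤ k := by exact_mod_cast hxk
  calc ∑ a ∈ s, ∑ b ∈ s, x a * A a b * x b ≤ (∑ a ∈ s, |x a|) ^ 2 * m := hb1
  _ ≤ ((s.card : ℝ) * ∑ a ∈ s, |x a| ^ 2) * m := mul_le_mul_of_nonneg_right hcs hm0
  _ ≤ ((k : ℝ) * 1) * m := by
      refine mul_le_mul_of_nonneg_right ?_ hm0
      refine mul_le_mul hcard hsq (Finset.sum_nonneg fun j _ => sq_nonneg _) ?_
      positivity
  _ = m * k := by ring

end TPaper
end

section
/- Let A be an m×m real symmetric positive semidefinite matrix with m ≥ 2. Then there exists an index j ∈ {1,…,m} such that the principal submatrix A_{m\j} obtained by deleting the j-th row and column of A satisfies λ_max(A_{m\j}) ≥ ((m-1)/m) · λ_max(A). -/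
namespace TPaper

open Matrix in
lemma eig_le_maxEig {n : Type*} [Fintype n] [DecidableEq n] {B : Matrix n n ℝ}
    (hB : B.IsHermitian) (i : n) : hB.eigenvalues i ≤ maxEig B := by
  refine le_csSup (Matrix.finite_real_spectrum (A := B)).bddAbove ?_
  rw [hB.spectrum_real_eq_range_eigenvalues]
  exact ⟨i, rfl⟩

open Matrix in
lemma dot_star_mulVec' {n : Type*} [Fintype n] [DecidableEq n]
    (M : Matrix n n ℝ) (v u : n → ℝ) :
    v ⬝ᵥ (M *ᵥ u) = (star M *ᵥ v) ⬝ᵥ u := by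
  rw [dotProduct_mulVec, show star M = Mᵀ by
    simp [Matrix.star_eq_conjTranspose, Matrix.conjTranspose, Matrix.map]; rfl]
  rw [← Matrix.vecMul_transpose, Matrix.transpose_transpose]

open Matrix in
lemma quad_le_maxEig {n : Type*} [Fintype n] [DecidableEq n] {B : Matrix n n ℝ}
    (hB : B.IsHermitian) (w : n → ℝ) :
    w ⬝ᵥ B *ᵥ w ≤ maxEig B * (w ⬝ᵥ w) := by
  classical
  set U : Matrix n n ℝ := (hB.eigenvectorUnitary : Matrix n n ℝ) with hU
  have hUU : U * star U = 1 := (Unitary.mem_iff.mp hB.eigenvectorUnitary.2).2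
  set y : n → ℝ := star U *ᵥ w with hy
  have hspec : B = U * Matrix.diagonal (RCLike.ofReal ∘ hB.eigenvalues) * star U :=
    by conv_lhs => rw [hB.spectral_theorem]
       simp [hU]
  have hdiag : Matrix.diagonal (RCLike.ofReal ∘ hB.eigenvalues)
      = Matrix.diagonal hB.eigenvalues := by congr 1
  have h1 : w ⬝ᵥ B *ᵥ w = ∑ i, hB.eigenvalues i * (y i)^2 := by
    conv_lhs => rw [hspec, hdiag]
    rw [← Matrix.mulVec_mulVec, ← Matrix.mulVec_mulVec, dot_star_mulVec', ← hy]
    simp [Matrix.mulVec_diagonal, dotProduct]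
    exact Finset.sum_congr rfl fun x _ => by ring
  have h2 : w ⬝ᵥ w = ∑ i, (y i)^2 := by
    have h3 : (∑ i, (y i)^2) = y ⬝ᵥ y := by simp [dotProduct, sq]
    rw [h3, hy, ← dot_star_mulVec', Matrix.mulVec_mulVec, hUU, Matrix.one_mulVec]
  rw [h1, h2, Finset.mul_sum]
  exact Finset.sum_le_sum fun i _ =>
    mul_le_mul_of_nonneg_right (eig_le_maxEig hB i) (sq_nonneg _)

open Matrix in
lemma exists_unit_eigvec {n : Type*} [Fintype n] [DecidableEq n] [Nonempty n]
    {B : Matrix n n ℝ} (hB : B.IsHermitian) :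
    ∃ v : n → ℝ, B *ᵥ v = maxEig B • v ∧ (∑ k, v k * v k) = 1 := by
  have hne : (spectrum ℝ B).Nonempty := by
    rw [hB.spectrum_real_eq_range_eigenvalues]; exact Set.range_nonempty _
  have hmem : maxEig B ∈ spectrum ℝ B :=
    hne.csSup_mem (Matrix.finite_real_spectrum (A := B))
  rw [hB.spectrum_real_eq_range_eigenvalues] at hmem
  obtain ⟨i, hi⟩ := hmem
  refine ⟨⇑(hB.eigenvectorBasis i), ?_, ?_⟩
  · rw [hB.mulVec_eigenvectorBasis, hi]
  · have h1 : ‖hB.eigenvectorBasis i‖ = 1 := hB.eigenvectorBasis.orthonormal.1 i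
    have h2 : (inner ℝ (hB.eigenvectorBasis i) (hB.eigenvectorBasis i) : ℝ) = 1 := by
      rw [real_inner_self_eq_norm_sq, h1]; norm_num
    rw [PiLp.inner_apply] at h2
    simpa [sq] using h2

open Matrix in
theorem statement14 (m : ℕ) (hm : 2 ≤ m)
    (A : Matrix (Fin m) (Fin m) ℝ) (hA : A.PosSemidef) :
    ∃ j : Fin m,
      ((m : ℝ) - 1) / m * maxEig A ≤ maxEig (subm A (Finset.univ.erase j)) := by
  classical
  have hH := hA.1
  haveI : Nonempty (Fin m) := ⟨⟨0, by omega⟩⟩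
  set μ := maxEig A with hμ
  obtain ⟨v, hv1, hv2⟩ := exists_unit_eigvec hH
  -- nonnegativity of μ
  have hvv : v ⬝ᵥ (A *ᵥ v) = μ := by
    rw [hv1, dotProduct_smul, smul_eq_mul]
    simp [dotProduct, hv2, hμ]
  have hμ0 : 0 ≤ μ := by
    have := hA.dotProduct_mulVec_nonneg v
    simpa [hvv] using this
  -- choose j minimizing v j ^ 2
  obtain ⟨j, -, hj⟩ := Finset.exists_min_image Finset.univ (fun k => v k * v k)
    ⟨Classical.arbitrary _, Finset.mem_univ _⟩
  set t := v j * v j with htdef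
  have ht0 : 0 ≤ t := mul_self_nonneg _
  have hmt : (m : ℝ) * t ≤ 1 := by
    have h1 : ∑ _k : Fin m, t ≤ ∑ k, v k * v k :=
      Finset.sum_le_sum fun k _ => hj k (Finset.mem_univ k)
    rw [hv2] at h1
    simpa [Finset.sum_const, Finset.card_univ, nsmul_eq_mul] using h1
  set F : Finset (Fin m) := Finset.univ.erase j with hF
  have hBH : (subm A F).IsHermitian := hH.submatrix _
  set w : {i // i ∈ F} → ℝ := fun k => v k.1 with hw
  have key := quad_le_maxEig hBH w
  -- w ⬝ᵥ w = 1 - t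
  have hww : w ⬝ᵥ w = 1 - t := by
    have h1 : w ⬝ᵥ w = ∑ k ∈ F, v k * v k := by
      rw [dotProduct, ← Finset.sum_coe_sort F (fun k => v k * v k)]
    have h2 : (∑ k ∈ F, v k * v k) + v j * v j = ∑ k, v k * v k :=
      Finset.sum_erase_add _ _ (Finset.mem_univ j)
    rw [hv2] at h2
    rw [h1, htdef]; linarith
  -- the truncated vector
  set c := v j with hc
  set e : Fin m → ℝ := Pi.single j 1 with he
  set u : Fin m → ℝ := v - c • e with hu
  have hueq : ∀ k, u k = if k = j then 0 else v k := by
    intro k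
    by_cases hk : k = j
    · subst hk; simp [hu, he, hc]
    · simp [hu, he, Pi.single_apply, hk]
  -- quadratic form over the submatrix equals quadratic form of u
  have hquad : w ⬝ᵥ (subm A F) *ᵥ w = u ⬝ᵥ A *ᵥ u := by
    have hL : w ⬝ᵥ (subm A F) *ᵥ w = ∑ a ∈ F, ∑ b ∈ F, v a * (A a b * v b) := by
      simp only [dotProduct, Matrix.mulVec, subm, Matrix.submatrix_apply,
        Finset.mul_sum]
      rw [← Finset.sum_coe_sort F (fun a => ∑ b ∈ F, v a * (A a b * v b))]
      exact Finset.sum_congr rfl fun a _ => by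
        rw [← Finset.sum_coe_sort F (fun b => v (↑a) * (A (↑a) b * v b))]
    have hR : u ⬝ᵥ A *ᵥ u = ∑ a ∈ F, ∑ b ∈ F, v a * (A a b * v b) := by
      have h1 : u ⬝ᵥ A *ᵥ u = ∑ a, ∑ b, u a * (A a b * u b) := by
        simp [dotProduct, Matrix.mulVec, Finset.mul_sum]
      rw [h1]
      rw [← Finset.sum_subset (Finset.subset_univ F) (fun a _ ha => ?_)]
      · refine Finset.sum_congr rfl fun a haF => ?_
        rw [← Finset.sum_subset (Finset.subset_univ F) (fun b _ hb => ?_)]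
        · refine Finset.sum_congr rfl fun b hbF => ?_
          rw [hueq a, hueq b, if_neg (Finset.ne_of_mem_erase haF),
            if_neg (Finset.ne_of_mem_erase hbF)]
        · have hb' : b = j := by
            by_contra hbj
            exact hb (Finset.mem_erase.mpr ⟨hbj, Finset.mem_univ b⟩)
          rw [hueq b, if_pos hb', mul_zero, mul_zero]
      · have ha' : a = j := by
          by_contra haj
          exact ha (Finset.mem_erase.mpr ⟨haj, Finset.mem_univ a⟩)
        rw [hueq a, if_pos ha']
        simp
    rw [hL, hR]
  -- auxiliary dot products
  have heA : e ⬝ᵥ (A *ᵥ v) = μ * c := by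
    rw [hv1, he]
    simp [single_dotProduct, hc, hμ]
  have hAe : v ⬝ᵥ (A *ᵥ e) = μ * c := by
    rw [dot_star_mulVec', show star A = A from hH, hv1, he]
    simp [smul_dotProduct, dotProduct_single, hc, mul_comm, hμ]
  have hee : e ⬝ᵥ (A *ᵥ e) = A j j := by
    rw [he]
    simp [Matrix.mulVec_single, single_dotProduct]
  -- expansion of the quadratic form of u
  have hquad2 : u ⬝ᵥ A *ᵥ u = μ - 2 * t * μ + t * A j j := by
    rw [hu]
    simp only [sub_dotProduct, dotProduct_sub, Matrix.mulVec_sub,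
      Matrix.mulVec_smul, smul_dotProduct, dotProduct_smul, smul_eq_mul]
    rw [hvv, heA, hAe, hee, htdef]
    ring
  -- PSD gives A j j ≥ t * μ
  have hAjj : t * μ ≤ A j j := by
    have hz := hA.dotProduct_mulVec_nonneg (e - c • v)
    have hsz : star (e - c • v) = e - c • v := by simp
    rw [hsz] at hz
    simp only [sub_dotProduct, dotProduct_sub, Matrix.mulVec_sub,
      Matrix.mulVec_smul, smul_dotProduct, dotProduct_smul, smul_eq_mul] at hz
    rw [hvv, heA, hee] at hz
    have hAe' : e ⬝ᵥ (A *ᵥ e) = A j j := hee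
    have hAev : v ⬝ᵥ (A *ᵥ e) = μ * c := hAe
    rw [hAev] at hz
    rw [htdef]
    nlinarith [hz]
  -- put everything together
  refine ⟨j, ?_⟩
  rw [hquad, hquad2, hww] at key
  have hm2 : (2 : ℝ) ≤ (m : ℝ) := by exact_mod_cast hm
  have hmpos : (0 : ℝ) < m := by linarith
  have ht1 : t < 1 := by nlinarith
  set D := maxEig (subm A F) with hD
  have hstep : μ * (1 - t) * (1 - t) ≤ D * (1 - t) := by nlinarith
  have hDlb : μ * (1 - t) ≤ D := le_of_mul_le_mul_right hstep (by linarith)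
  rw [div_mul_eq_mul_div, div_le_iff₀ hmpos]
  nlinarith [mul_le_mul_of_nonneg_left hmt hμ0]

end TPaper
end

section
/- One iteration of the TPower method does not decrease the objective when A is positive semidefinite: let A be a p×p real symmetric positive semidefinite matrix, let x be a unit vector with at most k nonzero entries such that Ax ≠ 0, let F be a top-k index set for Ax, let x̂ = Truncate(Ax, F), and assume x̂ ≠ 0. Then the normalized next iterate x⁺ = x̂/‖x̂‖ satisfies (x⁺)ᵀA x⁺ ≥ xᵀAx. -/
namespace TPaper

open Matrix
lemma sel {p : ℕ} (y : Fin p → ℝ) (S F : Finset (Fin p)) (h : S.card ≤ F.card)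
    (htop : ∀ i ∈ F, ∀ j ∉ F, |y j| ≤ |y i|) :
    ∑ i ∈ S, y i ^ 2 ≤ ∑ i ∈ F, y i ^ 2 := by
  have hcard : (S \ F).card ≤ (F \ S).card := by
    have h1 := Finset.card_sdiff_add_card_inter S F
    have h2 := Finset.card_sdiff_add_card_inter F S
    rw [Finset.inter_comm] at h2
    omega
  have hkey : ∑ i ∈ S \ F, y i ^ 2 ≤ ∑ i ∈ F \ S, y i ^ 2 := by
    rcases (S \ F).eq_empty_or_nonempty with h0 | h0
    · rw [h0, Finset.sum_empty]
      exact Finset.sum_nonneg fun i _ => sq_nonneg _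
    · have hFS : (F \ S).Nonempty := by
        rw [← Finset.card_pos]; rw [← Finset.card_pos] at h0; omega
      set c := (F \ S).inf' hFS (fun i => y i ^ 2) with hc
      have hc0 : 0 ≤ c := Finset.le_inf' hFS _ fun i _ => sq_nonneg _
      have hstep1 : ∑ i ∈ S \ F, y i ^ 2 ≤ (S \ F).card • c := by
        apply Finset.sum_le_card_nsmul
        intro j hj
        apply Finset.le_inf'
        intro i hi
        have hiF := (Finset.mem_sdiff.mp hi).1
        have hjF := (Finset.mem_sdiff.mp hj).2
        have habs := htop i hiF j hjF
        calc y j ^ 2 = |y j| ^ 2 := (sq_abs _).symm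
          _ ≤ |y i| ^ 2 := by gcongr
          _ = y i ^ 2 := sq_abs _
      have hstep2 : (F \ S).card • c ≤ ∑ i ∈ F \ S, y i ^ 2 :=
        Finset.card_nsmul_le_sum _ _ _ (fun i hi => Finset.inf'_le _ hi)
      calc ∑ i ∈ S \ F, y i ^ 2 ≤ (S \ F).card • c := hstep1
        _ ≤ (F \ S).card • c := nsmul_le_nsmul_left hc0 hcard
        _ ≤ ∑ i ∈ F \ S, y i ^ 2 := hstep2
  have hS : ∑ i ∈ S \ F, y i ^ 2 + ∑ i ∈ S ∩ F, y i ^ 2 = ∑ i ∈ S, y i ^ 2 := by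
    rw [← Finset.sdiff_inter_self_left S F]
    exact Finset.sum_sdiff Finset.inter_subset_left
  have hF : ∑ i ∈ F \ S, y i ^ 2 + ∑ i ∈ F ∩ S, y i ^ 2 = ∑ i ∈ F, y i ^ 2 := by
    rw [← Finset.sdiff_inter_self_left F S]
    exact Finset.sum_sdiff Finset.inter_subset_left
  rw [Finset.inter_comm] at hF
  linarith


open Matrix
open scoped MatrixOrder
theorem statement15 (p k : ℕ)
    (A : Matrix (Fin p) (Fin p) ℝ) (hA : A.PosSemidef)
    (x : Fin p → ℝ) (hxn : nrm2 x = 1) (hxsupp : (supp x).card ≤ k)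
    (hAx : A.mulVec x ≠ 0)
    (F : Finset (Fin p)) (hF : IsTopK (A.mulVec x) k F)
    (xhat : Fin p → ℝ) (hxhat : xhat = Trunc (A.mulVec x) F) (hxhat0 : xhat ≠ 0) :
    dotp x (A.mulVec x) ≤
      dotp ((nrm2 xhat)⁻¹ • xhat) (A.mulVec ((nrm2 xhat)⁻¹ • xhat)) := by
  obtain ⟨hFcard, hFtop⟩ := hF
  set y := A.mulVec x with hy
  set Q := CFC.sqrt A with hQdef
  have hQQ : Q * Q = A := CFC.sqrt_mul_sqrt_self A hA.nonneg
  have hQsymm : Qᵀ = Q := by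
    have h := (CFC.sqrt_nonneg A).posSemidef.isHermitian
    rwa [Matrix.IsHermitian, Matrix.conjTranspose_eq_transpose_of_trivial] at h
  have hdotA : ∀ u v : Fin p → ℝ, dotp u (A.mulVec v) = dotp (Q.mulVec u) (Q.mulVec v) := by
    intro u v
    show u ⬝ᵥ A.mulVec v = Q.mulVec u ⬝ᵥ Q.mulVec v
    rw [← hQQ, ← Matrix.mulVec_mulVec, Matrix.dotProduct_mulVec, ← Matrix.mulVec_transpose,
      hQsymm]
  have hsum1 : ∑ i, x i ^ 2 = 1 := by
    have h0 : 0 ≤ ∑ i, x i ^ 2 := Finset.sum_nonneg fun i _ => sq_nonneg _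
    have hx := hxn
    unfold nrm2 at hx
    nlinarith [Real.sq_sqrt h0]
  set a := dotp x y with ha
  have hapos : 0 < a := by
    have hform : a = ∑ i, (Q.mulVec x i) ^ 2 := by
      rw [ha, hy, hdotA]
      unfold dotp; exact Finset.sum_congr rfl fun i _ => (sq (Q.mulVec x i)).symm ▸ by ring
    have h0 : 0 ≤ a := hform ▸ Finset.sum_nonneg fun i _ => sq_nonneg _
    rcases h0.lt_or_eq with h | h
    · exact h
    · exfalso
      have hQx : Q.mulVec x = 0 := by
        funext i
        have hz : ∑ j, (Q.mulVec x j) ^ 2 = 0 := by rw [← hform, ← h]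
        have := (Finset.sum_eq_zero_iff_of_nonneg
          (fun j _ => sq_nonneg (Q.mulVec x j))).mp hz i (Finset.mem_univ i)
        exact pow_eq_zero_iff (two_ne_zero) |>.mp this
      apply hAx
      show A.mulVec x = 0
      rw [← hQQ, ← Matrix.mulVec_mulVec, hQx, Matrix.mulVec_zero]
  set n := nrm2 xhat with hn
  have hsumF : ∑ i, xhat i ^ 2 = ∑ i ∈ F, y i ^ 2 := by
    rw [hxhat]
    unfold Trunc
    simp only [apply_ite (· ^ 2), zero_pow two_ne_zero, Finset.sum_ite_mem, Finset.univ_inter]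
  have hsumF0 : 0 ≤ ∑ i, xhat i ^ 2 := Finset.sum_nonneg fun i _ => sq_nonneg _
  have hnpos : 0 < n := by
    rw [hn]
    unfold nrm2
    apply Real.sqrt_pos.mpr
    rcases (Finset.sum_nonneg (fun i (_ : i ∈ Finset.univ) => sq_nonneg (xhat i))).lt_or_eq
      with h | h
    · exact h
    · exfalso
      apply hxhat0
      funext i
      have := (Finset.sum_eq_zero_iff_of_nonneg (fun j _ => sq_nonneg (xhat j))).mp h.symm i
        (Finset.mem_univ i)
      exact pow_eq_zero_iff (two_ne_zero) |>.mp this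
  have hn2 : n ^ 2 = ∑ i ∈ F, y i ^ 2 := by
    rw [hn]; unfold nrm2; rw [Real.sq_sqrt hsumF0]; exact hsumF
  have hbF : dotp xhat y = n ^ 2 := by
    rw [hn2, hxhat]
    unfold dotp Trunc
    simp only [ite_mul, zero_mul, Finset.sum_ite_mem, Finset.univ_inter]
    exact Finset.sum_congr rfl fun i _ => (sq (y i)).symm
  -- a ≤ n
  have hsupx : ∀ i, i ∉ supp x → x i = 0 := by
    intro i hi
    by_contra hxi
    exact hi (Finset.mem_filter.mpr ⟨Finset.mem_univ i, hxi⟩)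
  have haLn : a ≤ n := by
    have hrestrict : a = ∑ i ∈ supp x, x i * y i := by
      rw [ha]
      unfold dotp
      exact (Finset.sum_subset (Finset.subset_univ _)
        (fun i _ hi => by rw [hsupx i hi, zero_mul])).symm
    have hx2 : ∑ i ∈ supp x, x i ^ 2 = 1 := by
      rw [← hsum1]
      exact Finset.sum_subset (Finset.subset_univ _)
        (fun i _ hi => by rw [hsupx i hi]; ring
        )
    have hcs := Finset.sum_mul_sq_le_sq_mul_sq (supp x) x y
    have hsel : ∑ i ∈ supp x, y i ^ 2 ≤ ∑ i ∈ F, y i ^ 2 :=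
      sel y (supp x) F (by omega) hFtop
    have ha2 : a ^ 2 ≤ n ^ 2 := by
      rw [hrestrict, hn2]
      calc (∑ i ∈ supp x, x i * y i) ^ 2
          ≤ (∑ i ∈ supp x, x i ^ 2) * ∑ i ∈ supp x, y i ^ 2 := hcs
        _ = ∑ i ∈ supp x, y i ^ 2 := by rw [hx2, one_mul]
        _ ≤ ∑ i ∈ F, y i ^ 2 := hsel
    nlinarith
  -- Cauchy-Schwarz for the PSD form
  set D := dotp xhat (A.mulVec xhat) with hD
  have hcs2 : (dotp xhat y) ^ 2 ≤ D * a := by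
    rw [hy, hdotA, hD, hdotA, ha, hy, hdotA]
    have h1 : ∀ u : Fin p → ℝ, dotp u u = ∑ i, u i ^ 2 := by
      intro u; unfold dotp; exact Finset.sum_congr rfl fun i _ => (sq (u i)).symm
    rw [h1, h1]
    calc (dotp (Q.mulVec xhat) (Q.mulVec x)) ^ 2
        ≤ (∑ i, (Q.mulVec xhat) i ^ 2) * ∑ i, (Q.mulVec x) i ^ 2 :=
          Finset.sum_mul_sq_le_sq_mul_sq _ _ _
      _ = (∑ i, (Q.mulVec xhat) i ^ 2) * ∑ i, (Q.mulVec x) i ^ 2 := rfl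
  have hDa : a * n ^ 2 ≤ D := by
    rw [hbF] at hcs2
    have ha2n : a * a ≤ n * n := mul_le_mul haLn haLn hapos.le hnpos.le
    have h1 : a * (a * n ^ 2) ≤ a * D := by
      nlinarith [mul_le_mul_of_nonneg_right ha2n (sq_nonneg n)]
    exact le_of_mul_le_mul_left h1 hapos
  have hRHS : dotp (n⁻¹ • xhat) (A.mulVec (n⁻¹ • xhat)) = n⁻¹ * n⁻¹ * D := by
    rw [Matrix.mulVec_smul, hD]
    unfold dotp
    rw [Finset.mul_sum]
    exact Finset.sum_congr rfl fun i _ => by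
      simp only [Pi.smul_apply, smul_eq_mul]; ring
  rw [hRHS, show n⁻¹ * n⁻¹ * D = D / n ^ 2 by rw [div_eq_mul_inv, pow_two, mul_inv]; ring]
  rw [le_div_iff₀ (by positivity)]
  exact hDa

end TPaper
end

section
/- One iteration of the TPower-DkS method does not decrease the objective when W is positive semidefinite: let W be an n×n real symmetric positive semidefinite matrix, let π ∈ {0,1}^n be a binary vector with exactly k entries equal to 1, let F be a top-k index set for Wπ, and let π' ∈ {0,1}^n be the indicator vector of F. Then (π')ᵀW π' ≥ πᵀWπ. -/
namespace TPaper

theorem statement16 (n k : ℕ)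
    (W : Matrix (Fin n) (Fin n) ℝ) (hW : W.PosSemidef)
    (pi : Fin n → ℝ) (hbin : ∀ i, pi i = 0 ∨ pi i = 1)
    (hcard : (Finset.univ.filter fun i => pi i = 1).card = k)
    (F : Finset (Fin n)) (hFcard : F.card = k)
    (hFtop : ∀ i ∈ F, ∀ j ∉ F, W.mulVec pi j ≤ W.mulVec pi i)
    (pi' : Fin n → ℝ) (hpi' : pi' = fun i => if i ∈ F then (1 : ℝ) else 0) :
    dotp pi (W.mulVec pi) ≤ dotp pi' (W.mulVec pi') := by
  classical
  set y : Fin n → ℝ := W.mulVec pi with hy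
  set S : Finset (Fin n) := Finset.univ.filter fun i => pi i = 1 with hSdef
  set d : Fin n → ℝ := fun i => pi' i - pi i with hd
  -- dotp is dotProduct
  have hdp : ∀ x z : Fin n → ℝ, dotp x z = dotProduct x z := fun _ _ => rfl
  -- symmetry of the quadratic form
  have hWsym : ∀ i j, W i j = W j i := by
    intro i j
    have := hW.1.apply j i
    simpa using this
  have hsym : ∀ u v : Fin n → ℝ, dotProduct u (W.mulVec v) = dotProduct v (W.mulVec u) := by
    intro u v
    simp only [dotProduct, Matrix.mulVec, Finset.mul_sum]
    rw [Finset.sum_comm]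
    apply Finset.sum_congr rfl
    intro j _
    apply Finset.sum_congr rfl
    intro i _
    rw [hWsym i j]; ring
  -- expansion
  have hpd : pi' = pi + d := by funext i; simp [hd]
  have key : dotp pi' (W.mulVec pi') =
      dotp pi (W.mulVec pi) + 2 * (dotProduct d y) + dotProduct d (W.mulVec d) := by
    rw [hdp, hdp, hpd, hy, Matrix.mulVec_add, add_dotProduct,
      dotProduct_add, dotProduct_add, hsym pi d]
    ring
  -- PSD term
  have hquad : 0 ≤ dotProduct d (W.mulVec d) := by
    have := hW.dotProduct_mulVec_nonneg d
    simpa using this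
  -- pi is the indicator of S
  have hpiS : ∀ i, pi i = if i ∈ S then (1 : ℝ) else 0 := by
    intro i
    rcases hbin i with h0 | h1
    · simp [hSdef, h0]
    · simp [hSdef, h1]
  -- cross term nonneg
  have hsumF : ∑ i, pi' i * y i = ∑ i ∈ F, y i := by
    rw [hpi']
    simp [ite_mul]
  have hsumS : ∑ i, pi i * y i = ∑ i ∈ S, y i := by
    rw [Finset.sum_congr rfl (fun i _ => by rw [hpiS i])]
    simp [ite_mul]
  have hcross : dotProduct d y = ∑ i ∈ F \ S, y i - ∑ i ∈ S \ F, y i := by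
    have h1 : ∑ i ∈ F ∩ S, y i + ∑ i ∈ F \ S, y i = ∑ i ∈ F, y i :=
      Finset.sum_inter_add_sum_sdiff F S y
    have h2 : ∑ i ∈ S ∩ F, y i + ∑ i ∈ S \ F, y i = ∑ i ∈ S, y i :=
      Finset.sum_inter_add_sum_sdiff S F y
    have h3 : dotProduct d y = ∑ i ∈ F, y i - ∑ i ∈ S, y i := by
      simp only [dotProduct, hd, sub_mul, Finset.sum_sub_distrib]
      rw [hsumF, hsumS]
    rw [h3, ← h1, ← h2, Finset.inter_comm S F]
    ring
  have hScard : S.card = k := hcard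
  have hcards : (S \ F).card = (F \ S).card :=
    Finset.card_sdiff_comm (by rw [hScard, hFcard])
  have hle : ∑ i ∈ S \ F, y i ≤ ∑ i ∈ F \ S, y i := by
    have e : {x // x ∈ S \ F} ≃ {x // x ∈ F \ S} := Finset.equivOfCardEq hcards
    calc ∑ i ∈ S \ F, y i = ∑ i : {x // x ∈ S \ F}, y i.val :=
          (Finset.sum_coe_sort (S \ F) y).symm
      _ = ∑ j : {x // x ∈ F \ S}, y (e.symm j).val :=
          (Equiv.sum_comp e.symm (fun i : {x // x ∈ S \ F} => y i.val)).symm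
      _ ≤ ∑ j : {x // x ∈ F \ S}, y j.val := by
          apply Finset.sum_le_sum
          intro j _
          have hjF : j.val ∈ F := (Finset.mem_sdiff.mp j.property).1
          have hnF : (e.symm j).val ∉ F :=
            (Finset.mem_sdiff.mp (e.symm j).property).2
          exact hFtop j.val hjF (e.symm j).val hnF
      _ = ∑ i ∈ F \ S, y i := Finset.sum_coe_sort (F \ S) y
  have hcross_nonneg : 0 ≤ dotProduct d y := by rw [hcross]; linarith
  rw [key]
  linarith

end TPaper
end
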